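/- arXiv:1103.3995 — 4 statements merged into one kernel-verified Lean document; each statement's English description precedes it below -/
import Mathlib

section
/- Let a, b, c and (l_ij), (m_ij) and F be as in the generalized Monge–Ampère setup. If p : ℝ² → ℝ is a twice continuously differentiable biperiodic function satisfying the generalized Monge–Ampère equation (GMA), then necessarily ∫_{𝕋²}(e^F − ab + c²) = 0. -/
open MeasureTheory

/-- Partial derivative in the first variable. -/
noncomputable def pdx (p : ℝ × ℝ → ℝ) (z : ℝ × ℝ) : ℝ := fderiv ℝ p z (1, 0)

/-- Partial derivative in the second variable. -/
noncomputable def pdy (p : ℝ × ℝ → ℝ) (z : ℝ × ℝ) : ℝ := fderiv ℝ p z (0, 1)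

/-- A function `ℝ² → ℝ` is biperiodic if it has period 1 in each variable. -/
def Biperiodic (p : ℝ × ℝ → ℝ) : Prop :=
  ∀ x y : ℝ, p (x + 1, y) = p (x, y) ∧ p (x, y + 1) = p (x, y)

/-- The integral over the torus `𝕋² = ℝ²/ℤ²` of (the descent of) a biperiodic function. -/
noncomputable def torusInt (f : ℝ × ℝ → ℝ) : ℝ := ∫ x in (0:ℝ)..1, ∫ y in (0:ℝ)..1, f (x, y)

open intervalIntegral Topology Filter Set

lemma hasDerivAt_sliceX {f : ℝ × ℝ → ℝ} {x y : ℝ} (hf : DifferentiableAt ℝ f (x, y)) :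
    HasDerivAt (fun t => f (t, y)) (pdx f (x, y)) x := by
  have h2 : HasDerivAt (fun t : ℝ => (t, y)) ((1:ℝ), (0:ℝ)) x :=
    (hasDerivAt_id x).prodMk (hasDerivAt_const x y)
  exact hf.hasFDerivAt.comp_hasDerivAt x h2

lemma hasDerivAt_sliceY {f : ℝ × ℝ → ℝ} {x y : ℝ} (hf : DifferentiableAt ℝ f (x, y)) :
    HasDerivAt (fun t => f (x, t)) (pdy f (x, y)) y := by
  have h2 : HasDerivAt (fun t : ℝ => (x, t)) ((0:ℝ), (1:ℝ)) y :=
    (hasDerivAt_const y x).prodMk (hasDerivAt_id y)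
  exact hf.hasFDerivAt.comp_hasDerivAt y h2

lemma contDiff_pdx {n : ℕ∞} {f : ℝ × ℝ → ℝ} (hf : ContDiff ℝ (n + 1) f) :
    ContDiff ℝ n (pdx f) := by
  have h := hf.fderiv_right (m := n) le_rfl
  exact (ContinuousLinearMap.apply ℝ ℝ ((1:ℝ), (0:ℝ))).contDiff.comp h

lemma contDiff_pdy {n : ℕ∞} {f : ℝ × ℝ → ℝ} (hf : ContDiff ℝ (n + 1) f) :
    ContDiff ℝ n (pdy f) := by
  have h := hf.fderiv_right (m := n) le_rfl
  exact (ContinuousLinearMap.apply ℝ ℝ ((0:ℝ), (1:ℝ))).contDiff.comp h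

lemma fderiv_shift {f : ℝ × ℝ → ℝ} (hf : Differentiable ℝ f) (c : ℝ × ℝ)
    (hc : ∀ z, f (z + c) = f z) (z : ℝ × ℝ) : fderiv ℝ f (z + c) = fderiv ℝ f z := by
  have h1 : HasFDerivAt (fun w => f (w + c)) (fderiv ℝ f (z + c)) z := by
    have := (hf (z + c)).hasFDerivAt.comp z ((hasFDerivAt_id z).add_const c)
    exact this
  have h2 : (fun w => f (w + c)) = f := funext hc
  rw [h2] at h1
  exact (h1.fderiv).symm ▸ rfl

lemma biperiodic_shift1 {f : ℝ × ℝ → ℝ} (hf : Biperiodic f) (z : ℝ × ℝ) :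
    f (z + (1, 0)) = f z := by
  obtain ⟨x, y⟩ := z
  simpa using (hf x y).1

lemma biperiodic_shift2 {f : ℝ × ℝ → ℝ} (hf : Biperiodic f) (z : ℝ × ℝ) :
    f (z + (0, 1)) = f z := by
  obtain ⟨x, y⟩ := z
  simpa using (hf x y).2

lemma biperiodic_pdx {f : ℝ × ℝ → ℝ} (hd : Differentiable ℝ f) (hf : Biperiodic f) :
    Biperiodic (pdx f) := by
  intro x y
  refine ⟨?_, ?_⟩
  · have := fderiv_shift hd (1,0) (biperiodic_shift1 hf) (x, y)
    simpa [pdx] using congrArg (fun L => L ((1:ℝ),(0:ℝ))) this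
  · have := fderiv_shift hd (0,1) (biperiodic_shift2 hf) (x, y)
    simpa [pdx] using congrArg (fun L => L ((1:ℝ),(0:ℝ))) this

lemma biperiodic_pdy {f : ℝ × ℝ → ℝ} (hd : Differentiable ℝ f) (hf : Biperiodic f) :
    Biperiodic (pdy f) := by
  intro x y
  refine ⟨?_, ?_⟩
  · have := fderiv_shift hd (1,0) (biperiodic_shift1 hf) (x, y)
    simpa [pdy] using congrArg (fun L => L ((0:ℝ),(1:ℝ))) this
  · have := fderiv_shift hd (0,1) (biperiodic_shift2 hf) (x, y)
    simpa [pdy] using congrArg (fun L => L ((0:ℝ),(1:ℝ))) this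

lemma pdx_pdy_symm {p : ℝ × ℝ → ℝ} (hp : ContDiff ℝ 2 p) (z : ℝ × ℝ) :
    pdx (pdy p) z = pdy (pdx p) z := by
  have hsymm : ∀ v w, fderiv ℝ (fderiv ℝ p) z v w = fderiv ℝ (fderiv ℝ p) z w v :=
    hp.contDiffAt.isSymmSndFDerivAt (by norm_num)
  have hd : DifferentiableAt ℝ (fderiv ℝ p) z :=
    ((hp.fderiv_right (m := 1) le_rfl).differentiable (by norm_num)) z
  have h1 : HasFDerivAt (pdy p)
      ((fderiv ℝ p z).comp (0 : (ℝ×ℝ) →L[ℝ] (ℝ×ℝ)) +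
        (fderiv ℝ (fderiv ℝ p) z).flip ((0:ℝ),(1:ℝ))) z :=
    hd.hasFDerivAt.clm_apply (hasFDerivAt_const _ _)
  have h2 : HasFDerivAt (pdx p)
      ((fderiv ℝ p z).comp (0 : (ℝ×ℝ) →L[ℝ] (ℝ×ℝ)) +
        (fderiv ℝ (fderiv ℝ p) z).flip ((1:ℝ),(0:ℝ))) z :=
    hd.hasFDerivAt.clm_apply (hasFDerivAt_const _ _)
  have e1 := congrArg (fun L => L ((1:ℝ),(0:ℝ))) h1.fderiv
  have e2 := congrArg (fun L => L ((0:ℝ),(1:ℝ))) h2.fderiv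
  simp only [ContinuousLinearMap.add_apply, ContinuousLinearMap.comp_apply,
    ContinuousLinearMap.zero_apply, map_zero, zero_add, ContinuousLinearMap.flip_apply] at e1 e2
  show fderiv ℝ (pdy p) z (1,0) = fderiv ℝ (pdx p) z (0,1)
  rw [e1, e2, hsymm]


def SQ : Set (ℝ × ℝ) := Set.Ioc 0 1 ×ˢ Set.Ioc 0 1

lemma integrableOn_SQ {f : ℝ × ℝ → ℝ} (hf : Continuous f) : IntegrableOn f SQ := by
  have h : IntegrableOn f (Set.Icc 0 1 ×ˢ Set.Icc 0 1) :=
    hf.continuousOn.integrableOn_compact (isCompact_Icc.prod isCompact_Icc)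
  exact h.mono_set (Set.prod_mono Set.Ioc_subset_Icc_self Set.Ioc_subset_Icc_self)

lemma torusInt_eq_set {f : ℝ × ℝ → ℝ} (hf : Continuous f) :
    torusInt f = ∫ z in SQ, f z := by
  have h : IntegrableOn f (Set.Ioc 0 1 ×ˢ Set.Ioc 0 1) ((volume : Measure ℝ).prod volume) :=
    integrableOn_SQ hf
  rw [torusInt, show (volume : Measure (ℝ × ℝ)) = (volume : Measure ℝ).prod volume from rfl,
    SQ, setIntegral_prod _ h]
  simp only [intervalIntegral.integral_of_le zero_le_one]

lemma torusInt_swap {f : ℝ × ℝ → ℝ} (hf : Continuous f) :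
    torusInt f = ∫ y in (0:ℝ)..1, ∫ x in (0:ℝ)..1, f (x, y) := by
  have h : Integrable (Function.uncurry fun x y => f (x, y))
      ((volume.restrict (Set.Ioc (0:ℝ) 1)).prod (volume.restrict (Set.Ioc (0:ℝ) 1))) := by
    rw [Measure.prod_restrict]
    exact integrableOn_SQ hf
  have := MeasureTheory.integral_integral_swap h
  simp only [intervalIntegral.integral_of_le zero_le_one, torusInt]
  exact this

lemma torusInt_add {f g : ℝ × ℝ → ℝ} (hf : Continuous f) (hg : Continuous g) :
    torusInt (fun z => f z + g z) = torusInt f + torusInt g := by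
  unfold torusInt
  rw [← intervalIntegral.integral_add]
  · apply intervalIntegral.integral_congr
    intro x _
    dsimp only
    rw [← intervalIntegral.integral_add]
    · exact (hf.comp (Continuous.prodMk_right x)).intervalIntegrable 0 1
    · exact (hg.comp (Continuous.prodMk_right x)).intervalIntegrable 0 1
  · exact (intervalIntegral.continuous_parametric_intervalIntegral_of_continuous'
      (f := fun x y => f (x, y)) (by exact hf) 0 1).intervalIntegrable 0 1
  · exact (intervalIntegral.continuous_parametric_intervalIntegral_of_continuous'
      (f := fun x y => g (x, y)) (by exact hg) 0 1).intervalIntegrable 0 1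

lemma torusInt_const_mul (r : ℝ) (f : ℝ × ℝ → ℝ) :
    torusInt (fun z => r * f z) = r * torusInt f := by
  unfold torusInt
  rw [← intervalIntegral.integral_const_mul]
  apply intervalIntegral.integral_congr
  intro x _
  dsimp only
  rw [← intervalIntegral.integral_const_mul]

lemma torusInt_sub {f g : ℝ × ℝ → ℝ} (hf : Continuous f) (hg : Continuous g) :
    torusInt (fun z => f z - g z) = torusInt f - torusInt g := by
  have h : (fun z => f z - g z) = fun z => f z + (-1) * g z := by funext z; ring
  rw [h, torusInt_add hf (by continuity), torusInt_const_mul]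
  ring

/-- FTC in the `y` direction: the torus integral of a `y`-slice derivative vanishes. -/
lemma torusInt_derivY_eq_zero {G g : ℝ × ℝ → ℝ} (hG : Biperiodic G)
    (hd : ∀ z : ℝ × ℝ, HasDerivAt (fun t => G (z.1, t)) (g z) z.2) (hg : Continuous g) :
    torusInt g = 0 := by
  have inner : ∀ x : ℝ, ∫ y in (0:ℝ)..1, g (x, y) = 0 := by
    intro x
    have h1 : ∫ y in (0:ℝ)..1, g (x, y) = G (x, 1) - G (x, 0) := by
      apply intervalIntegral.integral_eq_sub_of_hasDerivAt
        (f := fun t => G (x, t)) (f' := fun t => g (x, t))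
      · intro t _
        exact hd (x, t)
      · exact (hg.comp (Continuous.prodMk_right x)).intervalIntegrable 0 1
    rw [h1, show (1:ℝ) = 0 + 1 by ring, (hG x 0).2, sub_self]
  simp only [torusInt, inner, intervalIntegral.integral_zero]

/-- FTC in the `x` direction. -/
lemma torusInt_derivX_eq_zero {G g : ℝ × ℝ → ℝ} (hG : Biperiodic G)
    (hd : ∀ z : ℝ × ℝ, HasDerivAt (fun t => G (t, z.2)) (g z) z.1) (hg : Continuous g) :
    torusInt g = 0 := by
  rw [torusInt_swap hg]
  have inner : ∀ y : ℝ, ∫ x in (0:ℝ)..1, g (x, y) = 0 := by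
    intro y
    have h1 : ∫ x in (0:ℝ)..1, g (x, y) = G (1, y) - G (0, y) := by
      apply intervalIntegral.integral_eq_sub_of_hasDerivAt
        (f := fun t => G (t, y)) (f' := fun t => g (t, y))
      · intro t _
        exact hd (t, y)
      · exact (hg.comp (by continuity)).intervalIntegrable 0 1
    rw [h1, show (1:ℝ) = 0 + 1 by ring, (hG 0 y).1, sub_self]
  simp only [inner, intervalIntegral.integral_zero]

/-- Translation in `y` can be moved from one factor to the other. -/
lemma torusInt_translate {f g : ℝ × ℝ → ℝ} (hf : Continuous f) (hg : Continuous g)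
    (hfp : Biperiodic f) (hgp : Biperiodic g) (h : ℝ) :
    torusInt (fun z => f (z.1, z.2 + h) * g z) = torusInt (fun z => f z * g (z.1, z.2 - h)) := by
  unfold torusInt
  apply intervalIntegral.integral_congr
  intro x _
  dsimp only
  set k : ℝ → ℝ := fun t => f (x, t) * g (x, t - h) with hk
  have hper : Function.Periodic k 1 := by
    intro t
    simp only [hk]
    rw [(hfp x t).2, show t + 1 - h = (t - h) + 1 by ring, (hgp x (t - h)).2]
  have e1 : ∀ y : ℝ, f (x, y + h) * g (x, y) = k (y + h) := by
    intro y; simp [hk]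
  calc ∫ y in (0:ℝ)..1, f (x, y + h) * g (x, y)
      = ∫ y in (0:ℝ)..1, k (y + h) := by simp only [e1]
    _ = ∫ t in (0+h:ℝ)..(1+h:ℝ), k t := intervalIntegral.integral_comp_add_right k h
    _ = ∫ t in (h:ℝ)..(h+1:ℝ), k t := by rw [zero_add, add_comm 1 h]
    _ = ∫ t in (0:ℝ)..(0+1:ℝ), k t := hper.intervalIntegral_add_eq h 0
    _ = ∫ t in (0:ℝ)..1, k t := by rw [zero_add]

lemma measurableSet_SQ : MeasurableSet SQ := measurableSet_Ioc.prod measurableSet_Ioc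

lemma volume_SQ_lt_top : volume SQ < ⊤ := by
  refine lt_of_le_of_lt (measure_mono (Set.prod_mono Set.Ioc_subset_Icc_self Set.Ioc_subset_Icc_self)) ?_
  exact (isCompact_Icc.prod isCompact_Icc).measure_lt_top

/-- Forward difference quotients in `y`, paired with a continuous factor, converge in torus
integral to the derivative paired with that factor. -/
lemma tendsto_torusInt_slopeY_forward {G g f : ℝ × ℝ → ℝ} (hG : Continuous G)
    (hd : ∀ z : ℝ × ℝ, HasDerivAt (fun t => G (z.1, t)) (g z) z.2)
    (hg : Continuous g) (hf : Continuous f) :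
    Filter.Tendsto (fun h : ℝ => torusInt (fun z => (G (z.1, z.2 + h) - G z) / h * f z))
      (𝓝[>] (0:ℝ)) (𝓝 (torusInt (fun z => g z * f z))) := by
  have hcont : ∀ h : ℝ, Continuous (fun z : ℝ × ℝ => (G (z.1, z.2 + h) - G z) / h * f z) := by
    intro h
    exact (((hG.comp (by fun_prop)).sub hG).div_const h).mul hf
  have hrw : (fun h : ℝ => torusInt (fun z => (G (z.1, z.2 + h) - G z) / h * f z)) =
      fun h : ℝ => ∫ z in SQ, (G (z.1, z.2 + h) - G z) / h * f z := by
    funext h; exact torusInt_eq_set (hcont h)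
  rw [hrw, torusInt_eq_set (f := fun z => g z * f z) (hg.mul hf)]
  -- bounds
  set K : Set (ℝ × ℝ) := Set.Icc 0 1 ×ˢ Set.Icc (-1) 2 with hK
  obtain ⟨M, hM⟩ := (isCompact_Icc.prod isCompact_Icc).exists_bound_of_continuousOn
    (s := K) hg.continuousOn
  obtain ⟨M', hM'⟩ := (isCompact_Icc.prod isCompact_Icc).exists_bound_of_continuousOn
    (s := K) hf.continuousOn
  have hMem : ((1:ℝ)/2, (1:ℝ)/2) ∈ K := by
    constructor <;> constructor <;> norm_num
  have hM0 : 0 ≤ M := le_trans (norm_nonneg _) (hM _ hMem)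
  apply MeasureTheory.tendsto_integral_filter_of_dominated_convergence (bound := fun _ => M * M')
  · exact Filter.Eventually.of_forall fun h => (hcont h).aestronglyMeasurable
  · filter_upwards [Ioc_mem_nhdsGT_of_mem (by norm_num : (0:ℝ) ∈ Set.Ico 0 1)] with h hh
    apply MeasureTheory.ae_restrict_of_forall_mem measurableSet_SQ
    rintro ⟨x, y⟩ ⟨hx, hy⟩
    obtain ⟨cpt, hcpt, hceq⟩ := exists_hasDerivAt_eq_slope (fun t => G (x, t)) (fun t => g (x, t))
      (show y < y + h by linarith [hh.1]) (hG.comp (by fun_prop)).continuousOn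
      (fun t _ => hd (x, t))
    have hq : (G (x, y + h) - G (x, y)) / h = g (x, cpt) := by
      rw [hceq]; congr 1; ring
    rw [norm_mul]
    dsimp only
    rw [hq]
    have h1 : (x, cpt) ∈ K := by
      refine ⟨⟨le_of_lt hx.1, hx.2⟩, ?_, ?_⟩ <;>
        simp only [Set.mem_Ioo] at hcpt
      · linarith [hy.1]
      · linarith [hy.2, hh.2]
    have h2 : ((x, y) : ℝ × ℝ) ∈ K := ⟨⟨le_of_lt hx.1, hx.2⟩, by constructor <;> linarith [hy.1, hy.2]⟩
    exact mul_le_mul (hM _ h1) (hM' _ h2) (norm_nonneg _) hM0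
  · exact integrableOn_const volume_SQ_lt_top.ne
  · apply Filter.Eventually.of_forall
    intro z
    have h := hd z
    rw [hasDerivAt_iff_tendsto_slope] at h
    have hmap : Filter.Tendsto (fun h : ℝ => z.2 + h) (𝓝[>] (0:ℝ)) (𝓝[≠] z.2) := by
      apply tendsto_nhdsWithin_of_tendsto_nhds_of_eventually_within
      · have : Filter.Tendsto (fun h : ℝ => z.2 + h) (𝓝 (0:ℝ)) (𝓝 (z.2 + 0)) :=
          (continuous_const.add continuous_id).tendsto 0
        rw [add_zero] at this
        exact this.mono_left nhdsWithin_le_nhds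
      · filter_upwards [self_mem_nhdsWithin] with h hh
        simp only [Set.mem_Ioi] at hh
        simp only [Set.mem_compl_iff, Set.mem_singleton_iff]
        intro hcon
        nlinarith [hcon]
    have := (h.comp hmap).mul_const (f z)
    apply this.congr
    intro h
    simp only [Function.comp_apply, slope_def_field]
    rw [show z.2 + h - z.2 = h by ring]

/-- Backward difference quotients in `y`, paired with a continuous factor on the left. -/
lemma tendsto_torusInt_slopeY_backward {G g f : ℝ × ℝ → ℝ} (hG : Continuous G)
    (hd : ∀ z : ℝ × ℝ, HasDerivAt (fun t => G (z.1, t)) (g z) z.2)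
    (hg : Continuous g) (hf : Continuous f) :
    Filter.Tendsto (fun h : ℝ => torusInt (fun z => f z * ((G z - G (z.1, z.2 - h)) / h)))
      (𝓝[>] (0:ℝ)) (𝓝 (torusInt (fun z => f z * g z))) := by
  have hcont : ∀ h : ℝ, Continuous (fun z : ℝ × ℝ => f z * ((G z - G (z.1, z.2 - h)) / h)) := by
    intro h
    exact hf.mul ((hG.sub (hG.comp (by fun_prop))).div_const h)
  have hrw : (fun h : ℝ => torusInt (fun z => f z * ((G z - G (z.1, z.2 - h)) / h))) =
      fun h : ℝ => ∫ z in SQ, f z * ((G z - G (z.1, z.2 - h)) / h) := by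
    funext h; exact torusInt_eq_set (hcont h)
  rw [hrw, torusInt_eq_set (f := fun z => f z * g z) (hf.mul hg)]
  set K : Set (ℝ × ℝ) := Set.Icc 0 1 ×ˢ Set.Icc (-1) 2 with hK
  obtain ⟨M, hM⟩ := (isCompact_Icc.prod isCompact_Icc).exists_bound_of_continuousOn
    (s := K) hg.continuousOn
  obtain ⟨M', hM'⟩ := (isCompact_Icc.prod isCompact_Icc).exists_bound_of_continuousOn
    (s := K) hf.continuousOn
  have hMem : ((1:ℝ)/2, (1:ℝ)/2) ∈ K := by
    constructor <;> constructor <;> norm_num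
  have hM0 : 0 ≤ M := le_trans (norm_nonneg _) (hM _ hMem)
  apply MeasureTheory.tendsto_integral_filter_of_dominated_convergence (bound := fun _ => M' * M)
  · exact Filter.Eventually.of_forall fun h => (hcont h).aestronglyMeasurable
  · filter_upwards [Ioc_mem_nhdsGT_of_mem (by norm_num : (0:ℝ) ∈ Set.Ico 0 1)] with h hh
    apply MeasureTheory.ae_restrict_of_forall_mem measurableSet_SQ
    rintro ⟨x, y⟩ ⟨hx, hy⟩
    obtain ⟨cpt, hcpt, hceq⟩ := exists_hasDerivAt_eq_slope (fun t => G (x, t)) (fun t => g (x, t))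
      (show y - h < y by linarith [hh.1]) (hG.comp (by fun_prop)).continuousOn
      (fun t _ => hd (x, t))
    have hq : (G (x, y) - G (x, y - h)) / h = g (x, cpt) := by
      rw [hceq]; congr 1; ring
    rw [norm_mul]
    dsimp only
    rw [hq]
    have h1 : (x, cpt) ∈ K := by
      refine ⟨⟨le_of_lt hx.1, hx.2⟩, ?_, ?_⟩ <;>
        simp only [Set.mem_Ioo] at hcpt
      · linarith [hy.1, hh.2]
      · linarith [hy.2]
    have h2 : ((x, y) : ℝ × ℝ) ∈ K := ⟨⟨le_of_lt hx.1, hx.2⟩, by constructor <;> linarith [hy.1, hy.2]⟩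
    have hM'0 : 0 ≤ M' := le_trans (norm_nonneg _) (hM' _ hMem)
    exact mul_le_mul (hM' _ h2) (hM _ h1) (norm_nonneg _) hM'0
  · exact integrableOn_const volume_SQ_lt_top.ne
  · apply Filter.Eventually.of_forall
    intro z
    have h := hd z
    rw [hasDerivAt_iff_tendsto_slope] at h
    have hmap : Filter.Tendsto (fun h : ℝ => z.2 - h) (𝓝[>] (0:ℝ)) (𝓝[≠] z.2) := by
      apply tendsto_nhdsWithin_of_tendsto_nhds_of_eventually_within
      · have : Filter.Tendsto (fun h : ℝ => z.2 - h) (𝓝 (0:ℝ)) (𝓝 (z.2 - 0)) :=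
          (continuous_const.sub continuous_id).tendsto 0
        rw [sub_zero] at this
        exact this.mono_left nhdsWithin_le_nhds
      · filter_upwards [self_mem_nhdsWithin] with h hh
        simp only [Set.mem_Ioi] at hh
        simp only [Set.mem_compl_iff, Set.mem_singleton_iff]
        intro hcon
        nlinarith [hcon]
    have := (h.comp hmap).const_mul (f z)
    apply this.congr
    intro h
    simp only [Function.comp_apply, slope_def_field]
    rw [show z.2 - h - z.2 = -h by ring, div_neg, ← neg_div, neg_sub]

lemma torusInt_congr {f g : ℝ × ℝ → ℝ} (h : ∀ z, f z = g z) : torusInt f = torusInt g :=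
  congrArg torusInt (funext h)

lemma torusInt_hessian {p : ℝ × ℝ → ℝ} (hp : ContDiff ℝ 2 p) (hper : Biperiodic p) :
    torusInt (fun z => pdx (pdx p) z * pdy (pdy p) z) =
      torusInt (fun z => pdy (pdx p) z * pdy (pdx p) z) := by
  have hpd : Differentiable ℝ p := hp.differentiable (by norm_num)
  have hu : ContDiff ℝ 1 (pdx p) := contDiff_pdx (hp.of_le (by norm_num))
  have hv : ContDiff ℝ 1 (pdy p) := contDiff_pdy (hp.of_le (by norm_num))
  have hud : Differentiable ℝ (pdx p) := hu.differentiable (by norm_num)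
  have hvd : Differentiable ℝ (pdy p) := hv.differentiable (by norm_num)
  have hucont : Continuous (pdx p) := hu.continuous
  have hvcont : Continuous (pdy p) := hv.continuous
  have hUc : Continuous (pdx (pdx p)) := (contDiff_pdx (n := 0) (hu.of_le (by norm_num))).continuous
  have hVc : Continuous (pdy (pdx p)) := (contDiff_pdy (n := 0) (hu.of_le (by norm_num))).continuous
  have hWc : Continuous (pdy (pdy p)) := (contDiff_pdy (n := 0) (hv.of_le (by norm_num))).continuous
  have hXc : Continuous (pdx (pdy p)) := (contDiff_pdx (n := 0) (hv.of_le (by norm_num))).continuous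
  have hup : Biperiodic (pdx p) := biperiodic_pdx hpd hper
  have hvp : Biperiodic (pdy p) := biperiodic_pdy hpd hper
  have hUp : Biperiodic (pdx (pdx p)) := biperiodic_pdx hud hup
  have hsym := pdx_pdy_symm hp
  have syu : ∀ z : ℝ × ℝ, HasDerivAt (fun t => pdx p (z.1, t)) (pdy (pdx p) z) z.2 :=
    fun z => hasDerivAt_sliceY (hud _)
  have syv : ∀ z : ℝ × ℝ, HasDerivAt (fun t => pdy p (z.1, t)) (pdy (pdy p) z) z.2 :=
    fun z => hasDerivAt_sliceY (hvd _)
  have L1 := tendsto_torusInt_slopeY_forward hucont syu hVc hXc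
  have L2 := tendsto_torusInt_slopeY_backward hvcont syv hWc hUc
  have key : ∀ h : ℝ, torusInt (fun z => (pdx p (z.1, z.2 + h) - pdx p z) / h * pdx (pdy p) z)
      = torusInt (fun z => pdx (pdx p) z * ((pdy p z - pdy p (z.1, z.2 - h)) / h)) := by
    intro h
    have c2 : Continuous (fun z : ℝ × ℝ => pdx (pdx p) (z.1, z.2 + h)) := hUc.comp (by fun_prop)
    have cA : Continuous (fun z : ℝ × ℝ =>
        (pdx (pdx p) (z.1, z.2 + h) - pdx (pdx p) z) / h * pdy p z) :=
      ((c2.sub hUc).div_const h).mul hvcont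
    have cB : Continuous (fun z : ℝ × ℝ =>
        (pdx p (z.1, z.2 + h) - pdx p z) / h * pdx (pdy p) z) :=
      (((hucont.comp (by fun_prop : Continuous fun z : ℝ × ℝ => (z.1, z.2 + h))).sub
        hucont).div_const h).mul hXc
    have hzero : torusInt (fun z =>
        (pdx (pdx p) (z.1, z.2 + h) - pdx (pdx p) z) / h * pdy p z
          + (pdx p (z.1, z.2 + h) - pdx p z) / h * pdx (pdy p) z) = 0 := by
      apply torusInt_derivX_eq_zero
        (G := fun z => (pdx p (z.1, z.2 + h) - pdx p z) / h * pdy p z)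
      · intro x y
        constructor
        · dsimp only
          rw [(hup x (y + h)).1, (hup x y).1, (hvp x y).1]
        · dsimp only
          rw [show y + 1 + h = (y + h) + 1 by ring, (hup x (y + h)).2, (hup x y).2, (hvp x y).2]
      · intro z
        have d1 : HasDerivAt (fun t => pdx p (t, z.2 + h)) (pdx (pdx p) (z.1, z.2 + h)) z.1 :=
          hasDerivAt_sliceX (hud _)
        have d2 : HasDerivAt (fun t => pdx p (t, z.2)) (pdx (pdx p) z) z.1 :=
          hasDerivAt_sliceX (hud _)
        have d3 : HasDerivAt (fun t => pdy p (t, z.2)) (pdx (pdy p) z) z.1 :=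
          hasDerivAt_sliceX (hvd _)
        exact ((d1.sub d2).div_const h).mul d3
      · exact cA.add cB
    rw [torusInt_add cA cB] at hzero
    have T1 : torusInt (fun z => (pdx (pdx p) (z.1, z.2 + h) - pdx (pdx p) z) / h * pdy p z)
        = -torusInt (fun z => pdx (pdx p) z * ((pdy p z - pdy p (z.1, z.2 - h)) / h)) := by
      have cshift : Continuous (fun z : ℝ × ℝ => pdy p (z.1, z.2 - h)) := hvcont.comp (by fun_prop)
      calc torusInt (fun z => (pdx (pdx p) (z.1, z.2 + h) - pdx (pdx p) z) / h * pdy p z)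
          = torusInt (fun z => h⁻¹ *
              (pdx (pdx p) (z.1, z.2 + h) * pdy p z - pdx (pdx p) z * pdy p z)) :=
            torusInt_congr fun z => by ring
        _ = h⁻¹ * torusInt (fun z =>
              pdx (pdx p) (z.1, z.2 + h) * pdy p z - pdx (pdx p) z * pdy p z) :=
            torusInt_const_mul _ _
        _ = h⁻¹ * (torusInt (fun z => pdx (pdx p) (z.1, z.2 + h) * pdy p z)
              - torusInt (fun z => pdx (pdx p) z * pdy p z)) := by
            rw [torusInt_sub (f := fun z => pdx (pdx p) (z.1, z.2 + h) * pdy p z)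
              (g := fun z => pdx (pdx p) z * pdy p z) (c2.mul hvcont) (hUc.mul hvcont)]
        _ = h⁻¹ * (torusInt (fun z => pdx (pdx p) z * pdy p (z.1, z.2 - h))
              - torusInt (fun z => pdx (pdx p) z * pdy p z)) := by
            rw [torusInt_translate hUc hvcont hUp hvp h]
        _ = -(h⁻¹ * (torusInt (fun z => pdx (pdx p) z * pdy p z)
              - torusInt (fun z => pdx (pdx p) z * pdy p (z.1, z.2 - h)))) := by ring
        _ = -(h⁻¹ * torusInt (fun z =>
              pdx (pdx p) z * pdy p z - pdx (pdx p) z * pdy p (z.1, z.2 - h))) := by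
            rw [torusInt_sub (f := fun z => pdx (pdx p) z * pdy p z)
              (g := fun z => pdx (pdx p) z * pdy p (z.1, z.2 - h)) (hUc.mul hvcont) (hUc.mul cshift)]
        _ = -torusInt (fun z => h⁻¹ *
              (pdx (pdx p) z * pdy p z - pdx (pdx p) z * pdy p (z.1, z.2 - h))) := by
            rw [torusInt_const_mul]
        _ = -torusInt (fun z => pdx (pdx p) z * ((pdy p z - pdy p (z.1, z.2 - h)) / h)) := by
            rw [torusInt_congr (g := fun z =>
              pdx (pdx p) z * ((pdy p z - pdy p (z.1, z.2 - h)) / h)) (fun z => by ring)]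
    linarith [hzero, T1]
  have L1' : Filter.Tendsto
      (fun h => torusInt (fun z => pdx (pdx p) z * ((pdy p z - pdy p (z.1, z.2 - h)) / h)))
      (𝓝[>] (0:ℝ)) (𝓝 (torusInt (fun z => pdy (pdx p) z * pdx (pdy p) z))) :=
    L1.congr key
  have huniq := tendsto_nhds_unique L1' L2
  rw [← huniq]
  exact torusInt_congr fun z => by rw [hsym z]

/-- The normalization `∫ (e^F - ab + c²) = 0` is necessary for solvability of the
generalized Monge–Ampère equation on the 2-torus. -/
theorem gma_normalization_necessary (a b c l11 l12 l22 m11 m12 m22 : ℝ)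
    (hpd : (!![a, c; c, b]).PosDef)
    (h1 : m11 * l22 = 0)
    (h2 : l11 * l22 - l12 ^ 2 = 0)
    (h3 : m11 * m22 - m12 ^ 2 = 0)
    (h4 : l11 * m22 + l22 * m11 - 2 * l12 * m12 = 0)
    (F : ℝ × ℝ → ℝ) (hF : ContDiff ℝ (⊤ : ℕ∞) F) (hFper : Biperiodic F)
    (p : ℝ × ℝ → ℝ) (hp : ContDiff ℝ 2 p) (hper : Biperiodic p)
    (heq : ∀ z : ℝ × ℝ,
      (a + pdx (pdx p) z - l11 * pdx p z - m11 * pdy p z) *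
          (b + pdy (pdy p) z - l22 * pdx p z - m22 * pdy p z) -
        (c + pdy (pdx p) z - l12 * pdx p z - m12 * pdy p z) ^ 2 = Real.exp (F z)) :
    torusInt (fun z => Real.exp (F z) - a * b + c ^ 2) = 0 := by
  have hpdiff : Differentiable ℝ p := hp.differentiable (by norm_num)
  have hpc : Continuous p := hp.continuous
  have hu : ContDiff ℝ 1 (pdx p) := contDiff_pdx (hp.of_le (by norm_num))
  have hv : ContDiff ℝ 1 (pdy p) := contDiff_pdy (hp.of_le (by norm_num))
  have hud : Differentiable ℝ (pdx p) := hu.differentiable (by norm_num)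
  have hvd : Differentiable ℝ (pdy p) := hv.differentiable (by norm_num)
  have huc : Continuous (pdx p) := hu.continuous
  have hvc : Continuous (pdy p) := hv.continuous
  have hUc : Continuous (pdx (pdx p)) := (contDiff_pdx (n := 0) (hu.of_le (by norm_num))).continuous
  have hVc : Continuous (pdy (pdx p)) := (contDiff_pdy (n := 0) (hu.of_le (by norm_num))).continuous
  have hWc : Continuous (pdy (pdy p)) := (contDiff_pdy (n := 0) (hv.of_le (by norm_num))).continuous
  have hXc : Continuous (pdx (pdy p)) := (contDiff_pdx (n := 0) (hv.of_le (by norm_num))).continuous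
  have hup : Biperiodic (pdx p) := biperiodic_pdx hpdiff hper
  have hvp : Biperiodic (pdy p) := biperiodic_pdy hpdiff hper
  have hsym := pdx_pdy_symm hp
  -- the torus integral of the y-slice divergence part vanishes
  have hDY : torusInt (fun z =>
      ((((((a * pdy (pdy p) z) - 2*c * pdy (pdx p) z) - (a*m22 + b*m11 - 2*c*m12) * pdy p z)
        - l11 * (pdy (pdx p) z * pdy p z + pdx p z * pdy (pdy p) z))
        + l12 * (pdy (pdx p) z * pdx p z + pdx p z * pdy (pdx p) z))
        + m22/2 * (pdy (pdx p) z * pdx p z + pdx p z * pdy (pdx p) z))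
        - m11/2 * (pdy (pdy p) z * pdy p z + pdy p z * pdy (pdy p) z)) = 0 := by
    apply torusInt_derivY_eq_zero (G := fun z =>
      ((((((a * pdy p z) - 2*c * pdx p z) - (a*m22 + b*m11 - 2*c*m12) * p z)
        - l11 * (pdx p z * pdy p z))
        + l12 * (pdx p z * pdx p z))
        + m22/2 * (pdx p z * pdx p z))
        - m11/2 * (pdy p z * pdy p z))
    · intro x y
      constructor
      · dsimp only
        rw [(hup x y).1, (hvp x y).1, (hper x y).1]
      · dsimp only
        rw [(hup x y).2, (hvp x y).2, (hper x y).2]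
    · intro z
      have dyp : HasDerivAt (fun t => p (z.1, t)) (pdy p z) z.2 := hasDerivAt_sliceY (hpdiff _)
      have dyu : HasDerivAt (fun t => pdx p (z.1, t)) (pdy (pdx p) z) z.2 :=
        hasDerivAt_sliceY (hud _)
      have dyv : HasDerivAt (fun t => pdy p (z.1, t)) (pdy (pdy p) z) z.2 :=
        hasDerivAt_sliceY (hvd _)
      exact ((((((dyv.const_mul a).sub (dyu.const_mul (2*c))).sub
        (dyp.const_mul (a*m22 + b*m11 - 2*c*m12))).sub
        ((dyu.mul dyv).const_mul l11)).add
        ((dyu.mul dyu).const_mul l12)).add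
        ((dyu.mul dyu).const_mul (m22/2))).sub
        ((dyv.mul dyv).const_mul (m11/2))
    · fun_prop
  -- the torus integral of the x-slice divergence part vanishes
  have hDX : torusInt (fun z =>
      (((((b * pdx (pdx p) z) - (a*l22 + b*l11 - 2*c*l12) * pdx p z)
        - l22/2 * (pdx (pdx p) z * pdx p z + pdx p z * pdx (pdx p) z))
        + l11/2 * (pdx (pdy p) z * pdy p z + pdy p z * pdx (pdy p) z))
        - m22 * (pdx (pdx p) z * pdy p z + pdx p z * pdx (pdy p) z))
        + m12 * (pdx (pdy p) z * pdy p z + pdy p z * pdx (pdy p) z)) = 0 := by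
    apply torusInt_derivX_eq_zero (G := fun z =>
      (((((b * pdx p z) - (a*l22 + b*l11 - 2*c*l12) * p z)
        - l22/2 * (pdx p z * pdx p z))
        + l11/2 * (pdy p z * pdy p z))
        - m22 * (pdx p z * pdy p z))
        + m12 * (pdy p z * pdy p z))
    · intro x y
      constructor
      · dsimp only
        rw [(hup x y).1, (hvp x y).1, (hper x y).1]
      · dsimp only
        rw [(hup x y).2, (hvp x y).2, (hper x y).2]
    · intro z
      have dxp : HasDerivAt (fun t => p (t, z.2)) (pdx p z) z.1 := hasDerivAt_sliceX (hpdiff _)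
      have dxu : HasDerivAt (fun t => pdx p (t, z.2)) (pdx (pdx p) z) z.1 :=
        hasDerivAt_sliceX (hud _)
      have dxv : HasDerivAt (fun t => pdy p (t, z.2)) (pdx (pdy p) z) z.1 :=
        hasDerivAt_sliceX (hvd _)
      exact (((((dxu.const_mul b).sub
        (dxp.const_mul (a*l22 + b*l11 - 2*c*l12))).sub
        ((dxu.mul dxu).const_mul (l22/2))).add
        ((dxv.mul dxv).const_mul (l11/2))).sub
        ((dxu.mul dxv).const_mul m22)).add
        ((dxv.mul dxv).const_mul m12)
    · fun_prop
  -- pointwise decomposition of the integrand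
  have hpoint : ∀ z : ℝ × ℝ, Real.exp (F z) - a * b + c ^ 2 =
      (((((((a * pdy (pdy p) z) - 2*c * pdy (pdx p) z) - (a*m22 + b*m11 - 2*c*m12) * pdy p z)
        - l11 * (pdy (pdx p) z * pdy p z + pdx p z * pdy (pdy p) z))
        + l12 * (pdy (pdx p) z * pdx p z + pdx p z * pdy (pdx p) z))
        + m22/2 * (pdy (pdx p) z * pdx p z + pdx p z * pdy (pdx p) z))
        - m11/2 * (pdy (pdy p) z * pdy p z + pdy p z * pdy (pdy p) z))
      + (((((((b * pdx (pdx p) z) - (a*l22 + b*l11 - 2*c*l12) * pdx p z)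
        - l22/2 * (pdx (pdx p) z * pdx p z + pdx p z * pdx (pdx p) z))
        + l11/2 * (pdx (pdy p) z * pdy p z + pdy p z * pdx (pdy p) z))
        - m22 * (pdx (pdx p) z * pdy p z + pdx p z * pdx (pdy p) z))
        + m12 * (pdx (pdy p) z * pdy p z + pdy p z * pdx (pdy p) z))
      + (pdx (pdx p) z * pdy (pdy p) z - pdy (pdx p) z * pdy (pdx p) z)) := by
    intro z
    rw [← heq z, hsym z]
    linear_combination (pdx p z)^2 * h2 + (pdy p z)^2 * h3 + (pdx p z * pdy p z) * h4
  rw [torusInt_congr hpoint]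
  rw [torusInt_add (by fun_prop) (by fun_prop : Continuous fun z =>
      (((((((b * pdx (pdx p) z) - (a*l22 + b*l11 - 2*c*l12) * pdx p z)
        - l22/2 * (pdx (pdx p) z * pdx p z + pdx p z * pdx (pdx p) z))
        + l11/2 * (pdx (pdy p) z * pdy p z + pdy p z * pdx (pdy p) z))
        - m22 * (pdx (pdx p) z * pdy p z + pdx p z * pdx (pdy p) z))
        + m12 * (pdx (pdy p) z * pdy p z + pdy p z * pdx (pdy p) z))
      + (pdx (pdx p) z * pdy (pdy p) z - pdy (pdx p) z * pdy (pdx p) z)))]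
  rw [torusInt_add (g := fun z => pdx (pdx p) z * pdy (pdy p) z - pdy (pdx p) z * pdy (pdx p) z)
    (by fun_prop) ((hUc.mul hWc).sub (hVc.mul hVc))]
  rw [torusInt_sub (f := fun z => pdx (pdx p) z * pdy (pdy p) z)
    (g := fun z => pdy (pdx p) z * pdy (pdx p) z) (hUc.mul hWc) (hVc.mul hVc)]
  rw [hDY, hDX, torusInt_hessian hp hper]
  ring
end

section
/- Let a, b, c and (l_ij), (m_ij) and F be as in the generalized Monge–Ampère setup. If p and p̃ are twice continuously differentiable biperiodic functions on ℝ², each satisfying the generalized Monge–Ampère equation (GMA) and the ellipticity condition (E), then p − p̃ is a constant function. -/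
open MeasureTheory Topology

namespace GMAaux

/-- Iterated integral over the unit square, `y` outer, `x` inner. -/
noncomputable def iint (f : ℝ × ℝ → ℝ) : ℝ := ∫ y in (0:ℝ)..1, ∫ x in (0:ℝ)..1, f (x, y)

lemma contDiff_pdx {f : ℝ × ℝ → ℝ} {n : ℕ∞} (hf : ContDiff ℝ (n+1) f) : ContDiff ℝ n (pdx f) :=
  (hf.fderiv_right (by exact_mod_cast le_rfl)).clm_apply contDiff_const

lemma contDiff_pdy {f : ℝ × ℝ → ℝ} {n : ℕ∞} (hf : ContDiff ℝ (n+1) f) : ContDiff ℝ n (pdy f) :=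
  (hf.fderiv_right (by exact_mod_cast le_rfl)).clm_apply contDiff_const

lemma hasDerivAt_slice_x {f : ℝ × ℝ → ℝ} {x y : ℝ} (hf : DifferentiableAt ℝ f (x, y)) :
    HasDerivAt (fun t => f (t, y)) (pdx f (x, y)) x := by
  have h := hf.hasFDerivAt.comp_hasDerivAt x
    ((hasDerivAt_id x).prodMk (hasDerivAt_const x y))
  simpa [Function.comp_def, pdx] using h

lemma hasDerivAt_slice_y {f : ℝ × ℝ → ℝ} {x y : ℝ} (hf : DifferentiableAt ℝ f (x, y)) :
    HasDerivAt (fun t => f (x, t)) (pdy f (x, y)) y := by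
  have h := hf.hasFDerivAt.comp_hasDerivAt y
    ((hasDerivAt_const y x).prodMk (hasDerivAt_id y))
  simpa [Function.comp_def, pdy] using h

lemma pdx_pdy_comm {f : ℝ × ℝ → ℝ} (hf : ContDiff ℝ 2 f) (z : ℝ × ℝ) :
    pdx (pdy f) z = pdy (pdx f) z := by
  have hdf : Differentiable ℝ f := hf.differentiable (by norm_num)
  have hdf' : DifferentiableAt ℝ (fderiv ℝ f) z :=
    ((hf.fderiv_right (by norm_num : (1:WithTop ℕ∞)+1 ≤ 2)).differentiable (by norm_num)).differentiableAt
  have hsymm := second_derivative_symmetric (f := f) (f' := fderiv ℝ f)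
    (f'' := fderiv ℝ (fderiv ℝ f) z) (fun y => (hdf y).hasFDerivAt) hdf'.hasFDerivAt
  have e1 : pdx (pdy f) z = fderiv ℝ (fderiv ℝ f) z (1, 0) (0, 1) := by
    have : pdy f = fun w => fderiv ℝ f w (0, 1) := rfl
    rw [pdx, this, fderiv_clm_apply hdf' (differentiableAt_const _)]
    simp
  have e2 : pdy (pdx f) z = fderiv ℝ (fderiv ℝ f) z (0, 1) (1, 0) := by
    have : pdx f = fun w => fderiv ℝ f w (1, 0) := rfl
    rw [pdy, this, fderiv_clm_apply hdf' (differentiableAt_const _)]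
    simp
  rw [e1, e2, hsymm]

lemma fderiv_shift {f : ℝ × ℝ → ℝ} (c : ℝ × ℝ) (hfc : ∀ z, f (z + c) = f z)
    (hd : Differentiable ℝ f) (z : ℝ × ℝ) : fderiv ℝ f (z + c) = fderiv ℝ f z := by
  have h1 : (fun w => f (w + c)) = f := funext hfc
  have h2 : HasFDerivAt (fun w => f (w + c)) (fderiv ℝ f (z + c)) z := by
    have := (hd (z + c)).hasFDerivAt.comp z ((hasFDerivAt_id z).add_const c)
    simpa [Function.comp_def] using this
  rw [h1] at h2
  exact (h2.fderiv).symm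

lemma bp_shift_x {f : ℝ × ℝ → ℝ} (hf : Biperiodic f) (z : ℝ × ℝ) :
    f (z + (1, 0)) = f z := by
  obtain ⟨x, y⟩ := z
  simpa using (hf x y).1

lemma bp_shift_y {f : ℝ × ℝ → ℝ} (hf : Biperiodic f) (z : ℝ × ℝ) :
    f (z + (0, 1)) = f z := by
  obtain ⟨x, y⟩ := z
  simpa using (hf x y).2

lemma bp_pdx {f : ℝ × ℝ → ℝ} (hf : Biperiodic f) (hd : Differentiable ℝ f) :
    Biperiodic (pdx f) := by
  intro x y
  have e1 : ((x, y) + (1, 0) : ℝ × ℝ) = (x + 1, y) := by simp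
  have e2 : ((x, y) + (0, 1) : ℝ × ℝ) = (x, y + 1) := by simp
  constructor
  · show fderiv ℝ f (x + 1, y) (1, 0) = fderiv ℝ f (x, y) (1, 0)
    rw [← e1, fderiv_shift (1,0) (bp_shift_x hf) hd]
  · show fderiv ℝ f (x, y + 1) (1, 0) = fderiv ℝ f (x, y) (1, 0)
    rw [← e2, fderiv_shift (0,1) (bp_shift_y hf) hd]

lemma bp_pdy {f : ℝ × ℝ → ℝ} (hf : Biperiodic f) (hd : Differentiable ℝ f) :
    Biperiodic (pdy f) := by
  intro x y
  have e1 : ((x, y) + (1, 0) : ℝ × ℝ) = (x + 1, y) := by simp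
  have e2 : ((x, y) + (0, 1) : ℝ × ℝ) = (x, y + 1) := by simp
  constructor
  · show fderiv ℝ f (x + 1, y) (0, 1) = fderiv ℝ f (x, y) (0, 1)
    rw [← e1, fderiv_shift (1,0) (bp_shift_x hf) hd]
  · show fderiv ℝ f (x, y + 1) (0, 1) = fderiv ℝ f (x, y) (0, 1)
    rw [← e2, fderiv_shift (0,1) (bp_shift_y hf) hd]

lemma bp_int_shift {f : ℝ × ℝ → ℝ} (hf : Biperiodic f) (n m : ℤ) (x y : ℝ) :
    f (x + n, y + m) = f (x, y) := by
  have hx : Function.Periodic (fun t => f (t, y + m)) 1 := fun t => (hf t (y + m)).1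
  have h1 : f (x + n, y + m) = f (x, y + m) := by
    have := (hx.int_mul n) x
    simpa using this
  have hy : Function.Periodic (fun t => f (x, t)) 1 := fun t => (hf x t).2
  have h2 : f (x, y + m) = f (x, y) := by
    have := (hy.int_mul m) y
    simpa using this
  rw [h1, h2]

lemma bp_eq_fract {f : ℝ × ℝ → ℝ} (hf : Biperiodic f) (x y : ℝ) :
    f (x, y) = f (Int.fract x, Int.fract y) := by
  have h := bp_int_shift hf ⌊x⌋ ⌊y⌋ (Int.fract x) (Int.fract y)
  rw [← h]
  congr 1
  rw [Prod.mk.injEq]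
  exact ⟨(Int.fract_add_floor x).symm, (Int.fract_add_floor y).symm⟩

lemma pdx_mul {f g : ℝ × ℝ → ℝ} {z : ℝ × ℝ} (hf : DifferentiableAt ℝ f z)
    (hg : DifferentiableAt ℝ g z) :
    pdx (fun w => f w * g w) z = pdx f z * g z + f z * pdx g z := by
  show fderiv ℝ (fun w => f w * g w) z (1,0) = _
  rw [fderiv_fun_mul hf hg]
  simp [pdx]
  ring

lemma pdy_mul {f g : ℝ × ℝ → ℝ} {z : ℝ × ℝ} (hf : DifferentiableAt ℝ f z)
    (hg : DifferentiableAt ℝ g z) :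
    pdy (fun w => f w * g w) z = pdy f z * g z + f z * pdy g z := by
  show fderiv ℝ (fun w => f w * g w) z (0,1) = _
  rw [fderiv_fun_mul hf hg]
  simp [pdy]
  ring

lemma cont_slice_x {f : ℝ × ℝ → ℝ} (hf : Continuous f) (y : ℝ) :
    Continuous (fun x => f (x, y)) :=
  hf.comp (continuous_id.prodMk continuous_const)

lemma cont_slice_y {f : ℝ × ℝ → ℝ} (hf : Continuous f) (x : ℝ) :
    Continuous (fun y => f (x, y)) :=
  hf.comp (continuous_const.prodMk continuous_id)

lemma integral_pdx_slice {g : ℝ × ℝ → ℝ} (hg : Differentiable ℝ g) (hc : Continuous (pdx g))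
    (y : ℝ) : ∫ x in (0:ℝ)..1, pdx g (x, y) = g (1, y) - g (0, y) :=
  intervalIntegral.integral_eq_sub_of_hasDerivAt
    (fun t _ => hasDerivAt_slice_x (hg (t, y)))
    ((cont_slice_x hc y).intervalIntegrable 0 1)

lemma integral_pdy_slice {g : ℝ × ℝ → ℝ} (hg : Differentiable ℝ g) (hc : Continuous (pdy g))
    (x : ℝ) : ∫ y in (0:ℝ)..1, pdy g (x, y) = g (x, 1) - g (x, 0) :=
  intervalIntegral.integral_eq_sub_of_hasDerivAt
    (fun t _ => hasDerivAt_slice_y (hg (x, t)))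
    ((cont_slice_y hc x).intervalIntegrable 0 1)

lemma iint_swap {f : ℝ × ℝ → ℝ} (hf : Continuous f) :
    iint f = ∫ x in (0:ℝ)..1, ∫ y in (0:ℝ)..1, f (x, y) := by
  have h01 : (0:ℝ) ≤ 1 := zero_le_one
  have hint : Integrable (Function.uncurry fun y x => f (x, y))
      ((volume.restrict (Set.Ioc (0:ℝ) 1)).prod (volume.restrict (Set.Ioc (0:ℝ) 1))) := by
    rw [Measure.prod_restrict]
    have hcont : Continuous fun p : ℝ × ℝ => f (p.2, p.1) :=
      hf.comp (continuous_snd.prodMk continuous_fst)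
    have : IntegrableOn (fun p : ℝ × ℝ => f (p.2, p.1))
        (Set.Icc (0:ℝ) 1 ×ˢ Set.Icc (0:ℝ) 1) (volume.prod volume) := by
      rw [← Measure.volume_eq_prod]
      exact hcont.continuousOn.integrableOn_compact (isCompact_Icc.prod isCompact_Icc)
    exact (this.mono_set (Set.prod_mono Set.Ioc_subset_Icc_self Set.Ioc_subset_Icc_self))
  have := MeasureTheory.integral_integral_swap (f := fun y x => f (x, y))
      (μ := volume.restrict (Set.Ioc (0:ℝ) 1)) (ν := volume.restrict (Set.Ioc (0:ℝ) 1)) hint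
  unfold iint
  simp_rw [intervalIntegral.integral_of_le h01]
  exact this

lemma integral_shift_periodic {Ψ : ℝ → ℝ} (hper : Function.Periodic Ψ 1) (h : ℝ) :
    ∫ y in (0:ℝ)..1, Ψ (y + h) = ∫ y in (0:ℝ)..1, Ψ y := by
  rw [intervalIntegral.integral_comp_add_right]
  have := hper.intervalIntegral_add_eq h 0
  simpa [add_comm] using this

lemma cont_param {f : ℝ × ℝ → ℝ} (hf : Continuous f) :
    Continuous fun y => ∫ x in (0:ℝ)..1, f (x, y) := by
  apply intervalIntegral.continuous_parametric_intervalIntegral_of_continuous'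
  exact hf.comp (continuous_snd.prodMk continuous_fst)

lemma iint_congr {f g : ℝ × ℝ → ℝ} (h : ∀ z, f z = g z) : iint f = iint g := by
  have : f = g := funext h
  rw [this]

lemma iint_add {f g : ℝ × ℝ → ℝ} (hf : Continuous f) (hg : Continuous g) :
    iint (fun z => f z + g z) = iint f + iint g := by
  unfold iint
  have hinner : ∀ y : ℝ, (∫ x in (0:ℝ)..1, (f (x, y) + g (x, y)))
      = (∫ x in (0:ℝ)..1, f (x, y)) + ∫ x in (0:ℝ)..1, g (x, y) := fun y =>
    intervalIntegral.integral_add ((cont_slice_x hf y).intervalIntegrable 0 1)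
      ((cont_slice_x hg y).intervalIntegrable 0 1)
  calc (∫ y in (0:ℝ)..1, ∫ x in (0:ℝ)..1, (f (x, y) + g (x, y)))
      = ∫ y in (0:ℝ)..1, ((∫ x in (0:ℝ)..1, f (x, y)) + ∫ x in (0:ℝ)..1, g (x, y)) := by
        apply intervalIntegral.integral_congr; intro y _; exact hinner y
    _ = _ := intervalIntegral.integral_add ((cont_param hf).intervalIntegrable 0 1)
        ((cont_param hg).intervalIntegrable 0 1)

lemma iint_const_mul (c : ℝ) (f : ℝ × ℝ → ℝ) :
    iint (fun z => c * f z) = c * iint f := by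
  unfold iint
  simp_rw [intervalIntegral.integral_const_mul]

lemma iint_neg (f : ℝ × ℝ → ℝ) : iint (fun z => -f z) = -iint f := by
  have := iint_const_mul (-1) f
  simpa using this

lemma iint_sub {f g : ℝ × ℝ → ℝ} (hf : Continuous f) (hg : Continuous g) :
    iint (fun z => f z - g z) = iint f - iint g := by
  have h1 : iint (fun z => f z + -g z) = iint f + iint (fun z => -g z) :=
    iint_add hf hg.neg
  rw [iint_neg] at h1
  have h2 : (fun z => f z - g z) = (fun z => f z + -g z) := by funext z; ring
  rw [h2, h1]; ring

lemma contDiff_one_pdx {u : ℝ × ℝ → ℝ} (hu : ContDiff ℝ 2 u) : ContDiff ℝ 1 (pdx u) :=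
  (hu.fderiv_right (by norm_num : (1:WithTop ℕ∞)+1 ≤ 2)).clm_apply contDiff_const

lemma contDiff_one_pdy {u : ℝ × ℝ → ℝ} (hu : ContDiff ℝ 2 u) : ContDiff ℝ 1 (pdy u) :=
  (hu.fderiv_right (by norm_num : (1:WithTop ℕ∞)+1 ≤ 2)).clm_apply contDiff_const

lemma c1_cont_pdx {w : ℝ × ℝ → ℝ} (hw : ContDiff ℝ 1 w) : Continuous (pdx w) :=
  ((hw.fderiv_right (by norm_num : (0:WithTop ℕ∞)+1 ≤ 1)).clm_apply contDiff_const).continuous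

lemma c1_cont_pdy {w : ℝ × ℝ → ℝ} (hw : ContDiff ℝ 1 w) : Continuous (pdy w) :=
  ((hw.fderiv_right (by norm_num : (0:WithTop ℕ∞)+1 ≤ 1)).clm_apply contDiff_const).continuous

lemma bp_mul {f g : ℝ × ℝ → ℝ} (hf : Biperiodic f) (hg : Biperiodic g) :
    Biperiodic (fun z => f z * g z) := by
  intro x y
  constructor
  · show f (x+1, y) * g (x+1, y) = f (x, y) * g (x, y)
    rw [(hf x y).1, (hg x y).1]
  · show f (x, y+1) * g (x, y+1) = f (x, y) * g (x, y)
    rw [(hf x y).2, (hg x y).2]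

lemma bp_sub {f g : ℝ × ℝ → ℝ} (hf : Biperiodic f) (hg : Biperiodic g) :
    Biperiodic (fun z => f z - g z) := by
  intro x y
  constructor
  · show f (x+1, y) - g (x+1, y) = f (x, y) - g (x, y)
    rw [(hf x y).1, (hg x y).1]
  · show f (x, y+1) - g (x, y+1) = f (x, y) - g (x, y)
    rw [(hf x y).2, (hg x y).2]

lemma iint_pdx_zero {g : ℝ × ℝ → ℝ} (hg : Differentiable ℝ g) (hc : Continuous (pdx g))
    (hper : Biperiodic g) : iint (pdx g) = 0 := by
  unfold iint
  have h : ∀ y : ℝ, (∫ x in (0:ℝ)..1, pdx g (x, y)) = 0 := by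
    intro y
    rw [integral_pdx_slice hg hc y]
    have := (hper 0 y).1
    rw [zero_add] at this
    rw [this, sub_self]
  simp_rw [h]
  simp

lemma iint_pdy_zero {g : ℝ × ℝ → ℝ} (hg : Differentiable ℝ g) (hc : Continuous (pdy g))
    (hper : Biperiodic g) : iint (pdy g) = 0 := by
  rw [iint_swap hc]
  have h : ∀ x : ℝ, (∫ y in (0:ℝ)..1, pdy g (x, y)) = 0 := by
    intro x
    rw [integral_pdy_slice hg hc x]
    have := (hper x 0).2
    rw [zero_add] at this
    rw [this, sub_self]
  simp_rw [h]
  simp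

lemma iint_byparts_x {f g : ℝ × ℝ → ℝ} (hf : ContDiff ℝ 1 f) (hg : ContDiff ℝ 1 g)
    (hfper : Biperiodic f) (hgper : Biperiodic g) :
    iint (fun z => pdx f z * g z) = - iint (fun z => f z * pdx g z) := by
  have hfd : Differentiable ℝ f := hf.differentiable (by norm_num)
  have hgd : Differentiable ℝ g := hg.differentiable (by norm_num)
  have hpdxf : Continuous (pdx f) := c1_cont_pdx hf
  have hpdxg : Continuous (pdx g) := c1_cont_pdx hg
  have hprod : Differentiable ℝ (fun z => f z * g z) := hfd.mul hgd
  have heq : pdx (fun z => f z * g z) = fun z => pdx f z * g z + f z * pdx g z :=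
    funext fun z => pdx_mul (hfd z) (hgd z)
  have hpc : Continuous (pdx fun z => f z * g z) := by
    rw [heq]
    exact ((hpdxf.mul hg.continuous).add (hf.continuous.mul hpdxg))
  have h0 : iint (pdx fun z => f z * g z) = 0 := iint_pdx_zero hprod hpc (bp_mul hfper hgper)
  rw [heq] at h0
  rw [iint_add (hpdxf.fun_mul hg.continuous) (hf.continuous.fun_mul hpdxg)] at h0
  linarith

lemma iint_byparts_y {f g : ℝ × ℝ → ℝ} (hf : ContDiff ℝ 1 f) (hg : ContDiff ℝ 1 g)
    (hfper : Biperiodic f) (hgper : Biperiodic g) :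
    iint (fun z => pdy f z * g z) = - iint (fun z => f z * pdy g z) := by
  have hfd : Differentiable ℝ f := hf.differentiable (by norm_num)
  have hgd : Differentiable ℝ g := hg.differentiable (by norm_num)
  have hpdyf : Continuous (pdy f) := c1_cont_pdy hf
  have hpdyg : Continuous (pdy g) := c1_cont_pdy hg
  have hprod : Differentiable ℝ (fun z => f z * g z) := hfd.mul hgd
  have heq : pdy (fun z => f z * g z) = fun z => pdy f z * g z + f z * pdy g z :=
    funext fun z => pdy_mul (hfd z) (hgd z)
  have hpc : Continuous (pdy fun z => f z * g z) := by
    rw [heq]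
    exact ((hpdyf.mul hg.continuous).add (hf.continuous.mul hpdyg))
  have h0 : iint (pdy fun z => f z * g z) = 0 := iint_pdy_zero hprod hpc (bp_mul hfper hgper)
  rw [heq] at h0
  rw [iint_add (hpdyf.fun_mul hg.continuous) (hf.continuous.fun_mul hpdyg)] at h0
  linarith

lemma udiff {u : ℝ × ℝ → ℝ} (hu : ContDiff ℝ 2 u) : Differentiable ℝ u :=
  hu.differentiable (by norm_num)

lemma uxper {u : ℝ × ℝ → ℝ} (hu : ContDiff ℝ 2 u) (hper : Biperiodic u) :
    Biperiodic (pdx u) := bp_pdx hper (udiff hu)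

lemma uyper {u : ℝ × ℝ → ℝ} (hu : ContDiff ℝ 2 u) (hper : Biperiodic u) :
    Biperiodic (pdy u) := bp_pdy hper (udiff hu)

lemma cross_self_x {w : ℝ × ℝ → ℝ} (hw : ContDiff ℝ 1 w) (hwper : Biperiodic w) :
    iint (fun z => pdx w z * w z) = 0 := by
  have h := iint_byparts_x hw hw hwper hwper
  have h2 : iint (fun z => w z * pdx w z) = iint (fun z => pdx w z * w z) :=
    iint_congr fun z => mul_comm _ _
  rw [h2] at h
  linarith

lemma cross_self_y {w : ℝ × ℝ → ℝ} (hw : ContDiff ℝ 1 w) (hwper : Biperiodic w) :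
    iint (fun z => pdy w z * w z) = 0 := by
  have h := iint_byparts_y hw hw hwper hwper
  have h2 : iint (fun z => w z * pdy w z) = iint (fun z => pdy w z * w z) :=
    iint_congr fun z => mul_comm _ _
  rw [h2] at h
  linarith

lemma cross1 {u : ℝ × ℝ → ℝ} (hu : ContDiff ℝ 2 u) (hper : Biperiodic u) :
    iint (fun z => pdx (pdx u) z * pdx u z) = 0 :=
  cross_self_x (contDiff_one_pdx hu) (uxper hu hper)

lemma cross2 {u : ℝ × ℝ → ℝ} (hu : ContDiff ℝ 2 u) (hper : Biperiodic u) :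
    iint (fun z => pdy (pdx u) z * pdy u z) = 0 := by
  rw [iint_congr (fun z => by rw [← pdx_pdy_comm hu z] :
    ∀ z, pdy (pdx u) z * pdy u z = pdx (pdy u) z * pdy u z)]
  exact cross_self_x (contDiff_one_pdy hu) (uyper hu hper)

lemma cross3 {u : ℝ × ℝ → ℝ} (hu : ContDiff ℝ 2 u) (hper : Biperiodic u) :
    iint (fun z => pdy (pdx u) z * pdx u z) = 0 :=
  cross_self_y (contDiff_one_pdx hu) (uxper hu hper)

lemma cross4 {u : ℝ × ℝ → ℝ} (hu : ContDiff ℝ 2 u) (hper : Biperiodic u) :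
    iint (fun z => pdy (pdy u) z * pdy u z) = 0 :=
  cross_self_y (contDiff_one_pdy hu) (uyper hu hper)

lemma cross5 {u : ℝ × ℝ → ℝ} (hu : ContDiff ℝ 2 u) (hper : Biperiodic u) :
    iint (fun z => pdx (pdx u) z * pdy u z) = 0 := by
  have h := iint_byparts_x (contDiff_one_pdx hu) (contDiff_one_pdy hu) (uxper hu hper)
    (uyper hu hper)
  rw [h]
  have h2 : iint (fun z => pdx u z * pdx (pdy u) z) = iint (fun z => pdy (pdx u) z * pdx u z) :=
    iint_congr fun z => by rw [pdx_pdy_comm hu z]; ring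
  rw [h2, cross3 hu hper, neg_zero]

lemma cross6 {u : ℝ × ℝ → ℝ} (hu : ContDiff ℝ 2 u) (hper : Biperiodic u) :
    iint (fun z => pdy (pdy u) z * pdx u z) = 0 := by
  have h := iint_byparts_y (contDiff_one_pdy hu) (contDiff_one_pdx hu) (uyper hu hper)
    (uxper hu hper)
  rw [h]
  have h2 : iint (fun z => pdy u z * pdy (pdx u) z) = iint (fun z => pdy (pdx u) z * pdy u z) :=
    iint_congr fun z => by ring
  rw [h2, cross2 hu hper, neg_zero]

lemma pdx_shift_y {w : ℝ × ℝ → ℝ} (hd : Differentiable ℝ w) (c : ℝ) (z : ℝ × ℝ) :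
    pdx (fun z : ℝ × ℝ => w (z.1, z.2 + c)) z = pdx w (z.1, z.2 + c) := by
  have hTeq : (fun z : ℝ × ℝ => (z.1, z.2 + c)) = fun z : ℝ × ℝ => z + (0, c) := by
    funext v; simp [Prod.ext_iff]
  have hT : HasFDerivAt (fun z : ℝ × ℝ => (z.1, z.2 + c))
      (ContinuousLinearMap.id ℝ (ℝ × ℝ)) z := by
    rw [hTeq]; exact (hasFDerivAt_id z).add_const (0, c)
  have hcomp := (hd (z.1, z.2 + c)).hasFDerivAt.comp z hT
  have h3 : fderiv ℝ (fun z : ℝ × ℝ => w (z.1, z.2 + c)) z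
      = (fderiv ℝ w (z.1, z.2 + c)).comp (ContinuousLinearMap.id ℝ (ℝ × ℝ)) :=
    HasFDerivAt.fderiv (by simpa [Function.comp_def] using hcomp)
  show fderiv ℝ (fun z : ℝ × ℝ => w (z.1, z.2 + c)) z (1, 0) = _
  rw [h3]
  rfl

lemma contDiff_shift_y {w : ℝ × ℝ → ℝ} {n : ℕ∞} (hw : ContDiff ℝ n w) (c : ℝ) :
    ContDiff ℝ n (fun z : ℝ × ℝ => w (z.1, z.2 + c)) :=
  hw.comp (contDiff_fst.prodMk (contDiff_snd.add contDiff_const))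

lemma bp_shift_yc {w : ℝ × ℝ → ℝ} (hw : Biperiodic w) (c : ℝ) :
    Biperiodic (fun z : ℝ × ℝ => w (z.1, z.2 + c)) := by
  intro x y
  constructor
  · show w (x + 1, y + c) = w (x, y + c)
    exact (hw x (y + c)).1
  · show w (x, y + 1 + c) = w (x, y + c)
    have : y + 1 + c = (y + c) + 1 := by ring
    rw [this]
    exact (hw x (y + c)).2

lemma iint_shift_y {f g : ℝ × ℝ → ℝ} (hfper : Biperiodic f) (hgper : Biperiodic g) (h : ℝ) :
    iint (fun z => f z * g (z.1, z.2 + h)) = iint (fun z => f (z.1, z.2 - h) * g z) := by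
  unfold iint
  set Ψ : ℝ → ℝ := fun y => ∫ x in (0:ℝ)..1, f (x, y - h) * g (x, y) with hΨ
  have hΨper : Function.Periodic Ψ 1 := by
    intro y
    simp only [hΨ]
    apply intervalIntegral.integral_congr
    intro x _
    show f (x, y + 1 - h) * g (x, y + 1) = f (x, y - h) * g (x, y)
    have e1 : y + 1 - h = (y - h) + 1 := by ring
    rw [e1, (hfper x (y - h)).2, (hgper x y).2]
  have hmain : ∀ y : ℝ, (∫ x in (0:ℝ)..1, f (x, y) * g (x, y + h)) = Ψ (y + h) := by
    intro y
    simp only [hΨ]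
    apply intervalIntegral.integral_congr
    intro x _
    show f (x, y) * g (x, y + h) = f (x, y + h - h) * g (x, y + h)
    rw [add_sub_cancel_right]
  calc (∫ y in (0:ℝ)..1, ∫ x in (0:ℝ)..1, f (x, y) * g (x, y + h))
      = ∫ y in (0:ℝ)..1, Ψ (y + h) := by
        apply intervalIntegral.integral_congr
        intro y _
        exact hmain y
    _ = ∫ y in (0:ℝ)..1, Ψ y := integral_shift_periodic hΨper h
    _ = _ := rfl

lemma iint_abs_le {F : ℝ × ℝ → ℝ} {M : ℝ} (hF : Continuous F)
    (hM : ∀ x ∈ Set.Icc (0:ℝ) 1, ∀ y ∈ Set.Icc (0:ℝ) 1, |F (x, y)| ≤ M) : |iint F| ≤ M := by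
  have hM0 : 0 ≤ M := le_trans (abs_nonneg _) (hM 0 (by norm_num) 0 (by norm_num))
  have hin : ∀ y ∈ Set.Icc (0:ℝ) 1, |∫ x in (0:ℝ)..1, F (x, y)| ≤ M := by
    intro y hy
    have := intervalIntegral.norm_integral_le_of_norm_le_const
      (C := M) (f := fun x => F (x, y)) (a := 0) (b := 1) ?_
    · simpa using this
    · intro x hx
      have hx' : x ∈ Set.Icc (0:ℝ) 1 := by
        rcases hx with ⟨h1, h2⟩
        constructor
        · simp at h1 ⊢; linarith [h1]
        · simpa using h2
      simpa using hM x hx' y hy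
  have := intervalIntegral.norm_integral_le_of_norm_le_const
    (C := M) (f := fun y => ∫ x in (0:ℝ)..1, F (x, y)) (a := 0) (b := 1) ?_
  · simpa [iint] using this
  · intro y hy
    have hy' : y ∈ Set.Icc (0:ℝ) 1 := by
      rcases hy with ⟨h1, h2⟩
      constructor
      · simp at h1 ⊢; linarith [h1]
      · simpa using h2
    simpa using hin y hy'

lemma unif_dq {w : ℝ × ℝ → ℝ} (hd : Differentiable ℝ w) (hc : Continuous (pdy w))
    {ε : ℝ} (hε : 0 < ε) :
    ∃ δ > 0, ∀ e : ℝ, e ≠ 0 → |e| ≤ min δ 1 → ∀ x ∈ Set.Icc (0:ℝ) 1, ∀ y ∈ Set.Icc (0:ℝ) 1,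
      |(w (x, y + e) - w (x, y)) / e - pdy w (x, y)| ≤ ε := by
  have hK : IsCompact (Set.Icc (0:ℝ) 1 ×ˢ Set.Icc (-1:ℝ) 2) :=
    isCompact_Icc.prod isCompact_Icc
  have hUC : UniformContinuousOn (pdy w) (Set.Icc (0:ℝ) 1 ×ˢ Set.Icc (-1:ℝ) 2) :=
    hK.uniformContinuousOn_of_continuous hc.continuousOn
  obtain ⟨δ, hδ, hδ'⟩ := (Metric.uniformContinuousOn_iff).1 hUC ε hε
  refine ⟨δ / 2, by positivity, ?_⟩
  intro e he hesmall x hx y hy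
  -- the slice function
  have hslice : ∀ t : ℝ, HasDerivAt (fun s => w (x, s)) (pdy w (x, t)) t :=
    fun t => hasDerivAt_slice_y (hd (x, t))
  have hmem : ∀ t : ℝ, t ∈ Set.Icc (y - 1) (y + 1) → (x, t) ∈
      (Set.Icc (0:ℝ) 1 ×ˢ Set.Icc (-1:ℝ) 2) := by
    intro t ht
    constructor
    · exact hx
    · constructor
      · have := ht.1; have := hy.1; simp only []; linarith
      · have := ht.2; have := hy.2; simp only []; linarith
  have habs : |e| ≤ 1 := le_trans hesmall (min_le_right _ _)
  have hmvt : ∃ ξ : ℝ, |ξ - y| ≤ |e| ∧ (w (x, y + e) - w (x, y)) / e = pdy w (x, ξ) := by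
    rcases lt_or_gt_of_ne he with hneg | hpos
    · have hab : y + e < y := by linarith
      obtain ⟨ξ, hξ, hval⟩ := exists_hasDerivAt_eq_slope (fun s => w (x, s))
        (fun t => pdy w (x, t)) hab
        (Continuous.continuousOn (by
          exact (cont_slice_y (hd.continuous) x)))
        (fun t _ => hslice t)
      refine ⟨ξ, ?_, ?_⟩
      · have h1 := hξ.1; have h2 := hξ.2
        rw [abs_sub_le_iff]
        constructor
        · rw [abs_of_neg hneg]; linarith
        · rw [abs_of_neg hneg]; linarith
      · rw [hval]
        rw [show y - (y + e) = -e by ring,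
          show w (x, y) - w (x, y + e) = -(w (x, y + e) - w (x, y)) by ring, neg_div_neg_eq]
    · have hab : y < y + e := by linarith
      obtain ⟨ξ, hξ, hval⟩ := exists_hasDerivAt_eq_slope (fun s => w (x, s))
        (fun t => pdy w (x, t)) hab
        (Continuous.continuousOn (cont_slice_y (hd.continuous) x))
        (fun t _ => hslice t)
      refine ⟨ξ, ?_, ?_⟩
      · have h1 := hξ.1; have h2 := hξ.2
        rw [abs_sub_le_iff]
        constructor
        · rw [abs_of_pos hpos]; linarith
        · rw [abs_of_pos hpos]; linarith
      · rw [hval]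
        rw [add_sub_cancel_left]
  obtain ⟨ξ, hξy, hval⟩ := hmvt
  rw [hval]
  have hmem1 : (x, ξ) ∈ Set.Icc (0:ℝ) 1 ×ˢ Set.Icc (-1:ℝ) 2 := by
    apply hmem
    constructor
    · have := abs_le.1 hξy; linarith [this.1, habs, abs_le.1 habs]
    · have := abs_le.1 hξy; have h2 := this.2; linarith [habs]
  have hmem2 : (x, y) ∈ Set.Icc (0:ℝ) 1 ×ˢ Set.Icc (-1:ℝ) 2 := by
    apply hmem
    constructor <;> [linarith; linarith]
  have hdist : dist ((x, ξ) : ℝ × ℝ) (x, y) < δ := by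
    have h1 : |ξ - y| < δ := by
      have := le_trans hξy (le_trans hesmall (min_le_left _ _))
      linarith
    rw [Prod.dist_eq]
    apply max_lt
    · simpa using hδ
    · rw [Real.dist_eq]; exact h1
  have := hδ' _ hmem1 _ hmem2 hdist
  rw [Real.dist_eq] at this
  exact le_of_lt this

lemma pdx_sub {f g : ℝ × ℝ → ℝ} {z : ℝ × ℝ} (hf : DifferentiableAt ℝ f z)
    (hg : DifferentiableAt ℝ g z) :
    pdx (fun z => f z - g z) z = pdx f z - pdx g z := by
  show fderiv ℝ (fun z => f z - g z) z (1, 0) = _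
  rw [fderiv_fun_sub hf hg]
  rfl

open Filter in
lemma iint_tendsto_dq {w g : ℝ × ℝ → ℝ} (hw : ContDiff ℝ 1 w) (hg : Continuous g)
    {e : ℕ → ℝ} (he0 : ∀ n, e n ≠ 0) (helim : Tendsto e atTop (𝓝 0)) :
    Tendsto (fun n => iint (fun z => g z * ((w (z.1, z.2 + e n) - w z) / e n)))
      atTop (𝓝 (iint (fun z => g z * pdy w z))) := by
  have hd : Differentiable ℝ w := hw.differentiable (by norm_num)
  have hcpdy : Continuous (pdy w) := c1_cont_pdy hw
  obtain ⟨Mg, hMg⟩ := (isCompact_Icc.prod isCompact_Icc).exists_bound_of_continuousOn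
    (hg.continuousOn (s := Set.Icc (0:ℝ) 1 ×ˢ Set.Icc (0:ℝ) 1))
  have hMg0 : 0 ≤ Mg := le_trans (norm_nonneg _)
    (hMg (0, 0) ⟨by constructor <;> norm_num, by constructor <;> norm_num⟩)
  rw [Metric.tendsto_atTop]
  intro ε hε
  set ε' := ε / (2 * (Mg + 1)) with hε'def
  have hε' : 0 < ε' := by positivity
  obtain ⟨δ, hδ, hδ'⟩ := unif_dq hd hcpdy hε'
  obtain ⟨N, hN⟩ := (Metric.tendsto_atTop).1 helim (min δ 1) (by positivity)
  refine ⟨N, fun n hn => ?_⟩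
  have hen : |e n| ≤ min δ 1 := by
    have := hN n hn
    rw [Real.dist_eq, sub_zero] at this
    exact this.le
  have hcontdq : Continuous (fun z : ℝ × ℝ => (w (z.1, z.2 + e n) - w z) / e n) :=
    ((hd.continuous.comp (continuous_fst.prodMk
      (continuous_snd.add continuous_const))).sub hd.continuous).div_const _
  have hFn : Continuous (fun z : ℝ × ℝ => g z * ((w (z.1, z.2 + e n) - w z) / e n)) :=
    hg.mul hcontdq
  have hF : Continuous (fun z : ℝ × ℝ => g z * pdy w z) := hg.mul hcpdy
  rw [Real.dist_eq, ← iint_sub hFn hF]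
  have hb : |iint (fun z => g z * ((w (z.1, z.2 + e n) - w z) / e n) - g z * pdy w z)|
      ≤ Mg * ε' := by
    apply iint_abs_le (hFn.sub hF)
    intro x hx y hy
    have hpt : |((w (x, y + e n) - w (x, y)) / e n) - pdy w (x, y)| ≤ ε' :=
      hδ' (e n) (he0 n) hen x hx y hy
    have hgb : |g (x, y)| ≤ Mg := hMg (x, y) ⟨hx, hy⟩
    calc |g (x, y) * ((w ((x, y).1, (x, y).2 + e n) - w (x, y)) / e n) - g (x, y) * pdy w (x, y)|
        = |g (x, y)| * |((w (x, y + e n) - w (x, y)) / e n) - pdy w (x, y)| := by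
          rw [← abs_mul, mul_sub]
      _ ≤ Mg * ε' := mul_le_mul hgb hpt (abs_nonneg _) hMg0
  have h2 : Mg * ε' < ε := by
    rw [hε'def]
    have hpos : (0:ℝ) < 2 * (Mg + 1) := by linarith
    rw [← mul_div_assoc, div_lt_iff₀ hpos]
    nlinarith
  exact lt_of_le_of_lt hb h2

open Filter in
theorem iint_null {u : ℝ × ℝ → ℝ} (hu : ContDiff ℝ 2 u) (hper : Biperiodic u) :
    iint (fun z => pdx (pdx u) z * pdy (pdy u) z)
      = iint (fun z => pdy (pdx u) z * pdy (pdx u) z) := by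
  have hux1 : ContDiff ℝ 1 (pdx u) := contDiff_one_pdx hu
  have huy1 : ContDiff ℝ 1 (pdy u) := contDiff_one_pdy hu
  have huxd : Differentiable ℝ (pdx u) := hux1.differentiable (by norm_num)
  have huyd : Differentiable ℝ (pdy u) := huy1.differentiable (by norm_num)
  have hA : Continuous (pdx (pdx u)) := c1_cont_pdx hux1
  have hC : Continuous (pdy (pdx u)) := c1_cont_pdy hux1
  have huxper : Biperiodic (pdx u) := uxper hu hper
  have huyper : Biperiodic (pdy u) := uyper hu hper
  have hAper : Biperiodic (pdx (pdx u)) := bp_pdx huxper huxd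
  set e : ℕ → ℝ := fun n => 1 / (n + 1) with hedef
  have he0 : ∀ n, e n ≠ 0 := fun n => by
    simp only [hedef]
    positivity
  have helim : Tendsto e atTop (𝓝 0) := tendsto_one_div_add_atTop_nhds_zero_nat
  have T1 := iint_tendsto_dq huy1 hA he0 helim
  have he0' : ∀ n, -e n ≠ 0 := fun n => neg_ne_zero.2 (he0 n)
  have helim' : Tendsto (fun n => -e n) atTop (𝓝 0) := by
    simpa using helim.neg
  have T2 := iint_tendsto_dq hux1 hC he0' helim'
  -- identify the integrand limit of T2 with C·C via Clairaut
  have hT2eq : iint (fun z => pdy (pdx u) z * pdy (pdx u) z)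
      = iint (fun z => pdy (pdx u) z * pdy (pdx u) z) := rfl
  have hexact : ∀ n, iint (fun z => pdx (pdx u) z * ((pdy u (z.1, z.2 + e n) - pdy u z) / e n))
      = iint (fun z => pdy (pdx u) z * ((pdx u (z.1, z.2 + (-e n)) - pdx u z) / (-e n))) := by
    intro n
    set h : ℝ := e n with hh
    have hne : h ≠ 0 := he0 n
    have hshiftCont : Continuous (fun z : ℝ × ℝ => pdy u (z.1, z.2 + h)) :=
      huyd.continuous.comp (continuous_fst.prodMk (continuous_snd.add continuous_const))
    have hc1 : Continuous (fun z : ℝ × ℝ => pdx (pdx u) z * pdy u (z.1, z.2 + h)) :=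
      hA.mul hshiftCont
    have hc2 : Continuous (fun z : ℝ × ℝ => pdx (pdx u) z * pdy u z) := hA.mul huyd.continuous
    have hc3 : Continuous (fun z : ℝ × ℝ => pdx (pdx u) (z.1, z.2 + (-h)) * pdy u z) :=
      (hA.comp (continuous_fst.prodMk (continuous_snd.add continuous_const))).mul
        huyd.continuous
    have hshifted : ContDiff ℝ 1 (fun z : ℝ × ℝ => pdx u (z.1, z.2 + (-h))) :=
      contDiff_shift_y hux1 _
    have hfC1 : ContDiff ℝ 1 (fun z : ℝ × ℝ => pdx u (z.1, z.2 + (-h)) - pdx u z) :=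
      hshifted.sub hux1
    have hfper : Biperiodic (fun z : ℝ × ℝ => pdx u (z.1, z.2 + (-h)) - pdx u z) :=
      bp_sub (bp_shift_yc huxper _) huxper
    have hpdxf : ∀ z, pdx (fun z : ℝ × ℝ => pdx u (z.1, z.2 + (-h)) - pdx u z) z
        = pdx (pdx u) (z.1, z.2 + (-h)) - pdx (pdx u) z := by
      intro z
      rw [pdx_sub ((hshifted.differentiable (by norm_num)) z) (huxd z), pdx_shift_y huxd (-h) z]
    have s4 : iint (fun z => (pdx (pdx u) (z.1, z.2 + (-h)) - pdx (pdx u) z) * pdy u z)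
        = - iint (fun z => (pdx u (z.1, z.2 + (-h)) - pdx u z) * pdx (pdy u) z) := by
      have hb := iint_byparts_x hfC1 huy1 hfper huyper
      have h1 : iint (fun z => pdx (fun z : ℝ × ℝ => pdx u (z.1, z.2 + (-h)) - pdx u z) z
          * pdy u z) = iint (fun z => (pdx (pdx u) (z.1, z.2 + (-h)) - pdx (pdx u) z)
          * pdy u z) := iint_congr (fun z => by rw [hpdxf z])
      rw [← h1, hb]
    calc iint (fun z => pdx (pdx u) z * ((pdy u (z.1, z.2 + h) - pdy u z) / h))
        = (1/h) * (iint (fun z => pdx (pdx u) z * pdy u (z.1, z.2 + h))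
            - iint (fun z => pdx (pdx u) z * pdy u z)) := by
          rw [← iint_sub hc1 hc2, ← iint_const_mul]
          apply iint_congr
          intro z
          show pdx (pdx u) z * ((pdy u (z.1, z.2 + h) - pdy u z) / h)
            = (1/h) * (pdx (pdx u) z * pdy u (z.1, z.2 + h) - pdx (pdx u) z * pdy u z)
          ring
      _ = (1/h) * (iint (fun z => pdx (pdx u) (z.1, z.2 - h) * pdy u z)
            - iint (fun z => pdx (pdx u) z * pdy u z)) := by
          rw [iint_shift_y hAper huyper h]
      _ = (1/h) * iint (fun z => (pdx (pdx u) (z.1, z.2 + (-h)) - pdx (pdx u) z) * pdy u z) := by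
          have hc3' : Continuous (fun z : ℝ × ℝ => pdx (pdx u) (z.1, z.2 - h) * pdy u z) := by
            have : (fun z : ℝ × ℝ => pdx (pdx u) (z.1, z.2 - h) * pdy u z)
                = fun z : ℝ × ℝ => pdx (pdx u) (z.1, z.2 + (-h)) * pdy u z := by
              funext z; rw [sub_eq_add_neg]
            rw [this]; exact hc3
          rw [← iint_sub hc3' hc2]
          congr 1
          apply iint_congr
          intro z
          show pdx (pdx u) (z.1, z.2 - h) * pdy u z - pdx (pdx u) z * pdy u z
            = (pdx (pdx u) (z.1, z.2 + (-h)) - pdx (pdx u) z) * pdy u z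
          rw [sub_eq_add_neg z.2 h]
          ring
      _ = (1/h) * (- iint (fun z => (pdx u (z.1, z.2 + (-h)) - pdx u z) * pdx (pdy u) z)) := by
          rw [s4]
      _ = iint (fun z => pdy (pdx u) z * ((pdx u (z.1, z.2 + (-h)) - pdx u z) / (-h))) := by
          rw [← iint_neg, ← iint_const_mul]
          apply iint_congr
          intro z
          show (1/h) * (-((pdx u (z.1, z.2 + (-h)) - pdx u z) * pdx (pdy u) z))
            = pdy (pdx u) z * ((pdx u (z.1, z.2 + (-h)) - pdx u z) / (-h))
          rw [← pdx_pdy_comm hu z]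
          ring
  have T1' : Tendsto (fun n => iint (fun z => pdy (pdx u) z
      * ((pdx u (z.1, z.2 + (-e n)) - pdx u z) / (-e n)))) atTop
      (𝓝 (iint (fun z => pdx (pdx u) z * pdy (pdy u) z))) := by
    have : (fun n => iint (fun z => pdy (pdx u) z
        * ((pdx u (z.1, z.2 + (-e n)) - pdx u z) / (-e n))))
        = fun n => iint (fun z => pdx (pdx u) z * ((pdy u (z.1, z.2 + e n) - pdy u z) / e n)) :=
      funext fun n => (hexact n).symm
    rw [this]
    exact T1
  have T2' : Tendsto (fun n => iint (fun z => pdy (pdx u) z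
      * ((pdx u (z.1, z.2 + (-e n)) - pdx u z) / (-e n)))) atTop
      (𝓝 (iint (fun z => pdy (pdx u) z * pdy (pdx u) z))) := T2
  exact tendsto_nhds_unique T1' T2'

theorem iint_G_zero {u : ℝ × ℝ → ℝ} (hu : ContDiff ℝ 2 u) (hper : Biperiodic u)
    (l11 l12 l22 m11 m12 m22 : ℝ)
    (h2 : l11 * l22 - l12 ^ 2 = 0) (h3 : m11 * m22 - m12 ^ 2 = 0)
    (h4 : l11 * m22 + l22 * m11 - 2 * l12 * m12 = 0) :
    iint (fun z => (pdy (pdx u) z - l12 * pdx u z - m12 * pdy u z) ^ 2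
      - (pdx (pdx u) z - l11 * pdx u z - m11 * pdy u z)
        * (pdy (pdy u) z - l22 * pdx u z - m22 * pdy u z)) = 0 := by
  have hux1 : ContDiff ℝ 1 (pdx u) := contDiff_one_pdx hu
  have huy1 : ContDiff ℝ 1 (pdy u) := contDiff_one_pdy hu
  have hA : Continuous (pdx (pdx u)) := c1_cont_pdx hux1
  have hC : Continuous (pdy (pdx u)) := c1_cont_pdy hux1
  have hB : Continuous (pdy (pdy u)) := c1_cont_pdy huy1
  have hux : Continuous (pdx u) := hux1.continuous
  have huy : Continuous (pdy u) := huy1.continuous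
  have hptwise : ∀ z : ℝ × ℝ,
      (pdy (pdx u) z - l12 * pdx u z - m12 * pdy u z) ^ 2
        - (pdx (pdx u) z - l11 * pdx u z - m11 * pdy u z)
          * (pdy (pdy u) z - l22 * pdx u z - m22 * pdy u z)
      = (pdy (pdx u) z * pdy (pdx u) z - pdx (pdx u) z * pdy (pdy u) z)
        + (l22 * (pdx (pdx u) z * pdx u z)
        + (m22 * (pdx (pdx u) z * pdy u z)
        + (l11 * (pdy (pdy u) z * pdx u z)
        + (m11 * (pdy (pdy u) z * pdy u z)
        + ((-2 * l12) * (pdy (pdx u) z * pdx u z)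
        + (-2 * m12) * (pdy (pdx u) z * pdy u z)))))) := by
    intro z
    linear_combination (- pdx u z ^ 2) * h2 + (- pdy u z ^ 2) * h3
      + (- (pdx u z * pdy u z)) * h4
  rw [iint_congr hptwise]
  have ct0 : Continuous (fun z : ℝ × ℝ =>
      pdy (pdx u) z * pdy (pdx u) z - pdx (pdx u) z * pdy (pdy u) z) :=
    (hC.mul hC).sub (hA.mul hB)
  have ct1 : Continuous (fun z : ℝ × ℝ => l22 * (pdx (pdx u) z * pdx u z)) :=
    continuous_const.mul (hA.mul hux)
  have ct2 : Continuous (fun z : ℝ × ℝ => m22 * (pdx (pdx u) z * pdy u z)) :=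
    continuous_const.mul (hA.mul huy)
  have ct3 : Continuous (fun z : ℝ × ℝ => l11 * (pdy (pdy u) z * pdx u z)) :=
    continuous_const.mul (hB.mul hux)
  have ct4 : Continuous (fun z : ℝ × ℝ => m11 * (pdy (pdy u) z * pdy u z)) :=
    continuous_const.mul (hB.mul huy)
  have ct5 : Continuous (fun z : ℝ × ℝ => (-2 * l12) * (pdy (pdx u) z * pdx u z)) :=
    continuous_const.mul (hC.mul hux)
  have ct6 : Continuous (fun z : ℝ × ℝ => (-2 * m12) * (pdy (pdx u) z * pdy u z)) :=
    continuous_const.mul (hC.mul huy)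
  rw [iint_add ct0 (ct1.fun_add (ct2.fun_add (ct3.fun_add (ct4.fun_add (ct5.fun_add ct6))))),
    iint_add ct1 (ct2.fun_add (ct3.fun_add (ct4.fun_add (ct5.fun_add ct6)))),
    iint_add ct2 (ct3.fun_add (ct4.fun_add (ct5.fun_add ct6))),
    iint_add ct3 (ct4.fun_add (ct5.fun_add ct6)),
    iint_add ct4 (ct5.fun_add ct6),
    iint_add ct5 ct6]
  have i0 : iint (fun z : ℝ × ℝ =>
      pdy (pdx u) z * pdy (pdx u) z - pdx (pdx u) z * pdy (pdy u) z) = 0 := by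
    rw [iint_sub (hC.fun_mul hC) (hA.fun_mul hB), ← iint_null hu hper, sub_self]
  rw [i0]
  rw [iint_const_mul, iint_const_mul, iint_const_mul, iint_const_mul, iint_const_mul,
    iint_const_mul]
  rw [cross1 hu hper, cross5 hu hper, cross6 hu hper, cross4 hu hper, cross3 hu hper,
    cross2 hu hper]
  ring

theorem nonneg_iint_zero {G : ℝ × ℝ → ℝ} (hG : Continuous G) (hnn : ∀ z, 0 ≤ G z)
    (hper : Biperiodic G) (hzero : iint G = 0) : ∀ z, G z = 0 := by
  suffices hbox : ∀ x ∈ Set.Ico (0:ℝ) 1, ∀ y ∈ Set.Ico (0:ℝ) 1, G (x, y) = 0 by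
    intro z
    obtain ⟨x, y⟩ := z
    rw [bp_eq_fract hper x y]
    exact hbox _ ⟨Int.fract_nonneg x, Int.fract_lt_one x⟩ _
      ⟨Int.fract_nonneg y, Int.fract_lt_one y⟩
  intro x0 hx0 y0 hy0
  by_contra hne
  have hpos : 0 < G (x0, y0) := lt_of_le_of_ne (hnn _) (Ne.symm hne)
  set c := G (x0, y0) with hc
  obtain ⟨δ, hδpos, hδ⟩ := Metric.continuousAt_iff.1 hG.continuousAt (c/2) (by positivity)
  set r := min (δ/2) (min (1 - x0) (1 - y0)) with hr
  have hrpos : 0 < r := by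
    apply lt_min (by positivity)
    apply lt_min <;> [linarith [hx0.2]; linarith [hy0.2]]
  have hrx : x0 + r ≤ 1 := by
    have : r ≤ 1 - x0 := le_trans (min_le_right _ _) (min_le_left _ _)
    linarith
  have hry : y0 + r ≤ 1 := by
    have : r ≤ 1 - y0 := le_trans (min_le_right _ _) (min_le_right _ _)
    linarith
  have hlow : ∀ x ∈ Set.Icc x0 (x0 + r), ∀ y ∈ Set.Icc y0 (y0 + r), c/2 ≤ G (x, y) := by
    intro x hx y hy
    have hdist : dist ((x, y) : ℝ × ℝ) (x0, y0) < δ := by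
      rw [Prod.dist_eq]
      have h1 : |x - x0| < δ := by
        rw [abs_of_nonneg (by linarith [hx.1])]
        have : r ≤ δ/2 := min_le_left _ _
        linarith [hx.2]
      have h2 : |y - y0| < δ := by
        rw [abs_of_nonneg (by linarith [hy.1])]
        have : r ≤ δ/2 := min_le_left _ _
        linarith [hy.2]
      exact max_lt (by rwa [Real.dist_eq]) (by rwa [Real.dist_eq])
    have := hδ hdist
    rw [Real.dist_eq] at this
    have := abs_lt.1 this
    linarith [this.1]
  -- inner integral lower bound for y in the strip
  have hinner_nonneg : ∀ y : ℝ, 0 ≤ ∫ x in (0:ℝ)..1, G (x, y) :=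
    fun y => intervalIntegral.integral_nonneg zero_le_one (fun x _ => hnn (x, y))
  have hinner_low : ∀ y ∈ Set.Icc y0 (y0 + r), (c/2) * r ≤ ∫ x in (0:ℝ)..1, G (x, y) := by
    intro y hy
    have hsub : (∫ x in x0..(x0 + r), G (x, y)) ≤ ∫ x in (0:ℝ)..1, G (x, y) := by
      apply intervalIntegral.integral_mono_interval hx0.1 (by linarith) hrx
      · exact Filter.Eventually.of_forall (fun x => hnn (x, y))
      · exact (cont_slice_x hG y).intervalIntegrable 0 1
    have hconst : (c/2) * r ≤ ∫ x in x0..(x0 + r), G (x, y) := by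
      have := intervalIntegral.integral_mono_on (μ := volume) (f := fun _ : ℝ => c/2)
        (g := fun x => G (x, y)) (by linarith : x0 ≤ x0 + r)
        (intervalIntegrable_const) ((cont_slice_x hG y).intervalIntegrable _ _)
        (fun x hx => hlow x hx y hy)
      rw [intervalIntegral.integral_const] at this
      have e1 : (x0 + r - x0) • (c/2) = (c/2) * r := by
        rw [smul_eq_mul]; ring
      rw [e1] at this
      exact this
    linarith
  -- outer bound
  have houter : (c/2) * r * r ≤ iint G := by
    unfold iint
    have hsub : (∫ y in y0..(y0 + r), ∫ x in (0:ℝ)..1, G (x, y))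
        ≤ ∫ y in (0:ℝ)..1, ∫ x in (0:ℝ)..1, G (x, y) := by
      apply intervalIntegral.integral_mono_interval hy0.1 (by linarith) hry
      · exact Filter.Eventually.of_forall (fun y => hinner_nonneg y)
      · exact (cont_param hG).intervalIntegrable 0 1
    have hconst : (c/2) * r * r ≤ ∫ y in y0..(y0 + r), ∫ x in (0:ℝ)..1, G (x, y) := by
      have := intervalIntegral.integral_mono_on (μ := volume) (f := fun _ : ℝ => (c/2) * r)
        (g := fun y => ∫ x in (0:ℝ)..1, G (x, y)) (by linarith : y0 ≤ y0 + r)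
        (intervalIntegrable_const) ((cont_param hG).intervalIntegrable _ _)
        (fun y hy => hinner_low y hy)
      rw [intervalIntegral.integral_const] at this
      have e1 : (y0 + r - y0) • ((c/2) * r) = (c/2) * r * r := by
        rw [smul_eq_mul]; ring
      rw [e1] at this
      exact this
    linarith
  rw [hzero] at houter
  nlinarith [mul_pos (mul_pos (by positivity : (0:ℝ) < c/2) hrpos) hrpos]

lemma posdef_fin_two {A B C : ℝ} (h : (!![A, C; C, B]).PosDef) :
    0 < A ∧ 0 < A * B - C ^ 2 := by
  constructor
  · have hne : (![1, 0] : Fin 2 → ℝ) ≠ 0 := by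
      intro hcon
      have := congrFun hcon 0
      simp at this
    have := h.dotProduct_mulVec_pos hne
    simpa [Matrix.mulVec, dotProduct, Fin.sum_univ_two] using this
  · have hdet := h.det_pos
    rw [Matrix.det_fin_two_of] at hdet
    nlinarith [hdet]

lemma det_diff_nonneg {p11 p12 p22 q11 q12 q22 : ℝ} (hp11 : 0 < p11)
    (hp : 0 < p11 * p22 - p12 ^ 2) (hq11 : 0 < q11) (hq : 0 < q11 * q22 - q12 ^ 2)
    (hdet : p11 * p22 - p12 ^ 2 = q11 * q22 - q12 ^ 2) :
    0 ≤ (p12 - q12) ^ 2 - (p11 - q11) * (p22 - q22) := by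
  by_contra hcon
  push_neg at hcon
  have hdpos : 0 < (p11 - q11) * (p22 - q22) - (p12 - q12) ^ 2 := by linarith
  have e1 : p11 * ((p11 - q11) * (p22 - q22) - (p12 - q12) ^ 2) * (p11 - q11)
      = p11 ^ 2 * ((p11 - q11) * (p22 - q22) - (p12 - q12) ^ 2)
      + (p11 * (p12 - q12) - p12 * (p11 - q11)) ^ 2
      + (p11 * p22 - p12 ^ 2) * (p11 - q11) ^ 2 := by
    linear_combination (-(p11 * (p11 - q11))) * hdet
  have e2 : -(q11 * ((p11 - q11) * (p22 - q22) - (p12 - q12) ^ 2) * (p11 - q11))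
      = q11 ^ 2 * ((p11 - q11) * (p22 - q22) - (p12 - q12) ^ 2)
      + (q11 * (p12 - q12) - q12 * (p11 - q11)) ^ 2
      + (q11 * q22 - q12 ^ 2) * (p11 - q11) ^ 2 := by
    linear_combination (-(q11 * (p11 - q11))) * hdet
  have h1 : p11 ^ 2 * ((p11 - q11) * (p22 - q22) - (p12 - q12) ^ 2)
      ≤ p11 * ((p11 - q11) * (p22 - q22) - (p12 - q12) ^ 2) * (p11 - q11) := by
    nlinarith [sq_nonneg (p11 * (p12 - q12) - p12 * (p11 - q11)),
      mul_nonneg hp.le (sq_nonneg (p11 - q11))]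
  have h2 : q11 ^ 2 * ((p11 - q11) * (p22 - q22) - (p12 - q12) ^ 2)
      ≤ -(q11 * ((p11 - q11) * (p22 - q22) - (p12 - q12) ^ 2) * (p11 - q11)) := by
    nlinarith [sq_nonneg (q11 * (p12 - q12) - q12 * (p11 - q11)),
      mul_nonneg hq.le (sq_nonneg (p11 - q11))]
  have hd1 : p11 ≤ p11 - q11 := by
    nlinarith [mul_pos hp11 hdpos]
  have hd2 : q11 ≤ -(p11 - q11) := by
    nlinarith [mul_pos hq11 hdpos]
  linarith

lemma det_diff_eq_zero {p11 p12 p22 q11 q12 q22 : ℝ} (hp11 : 0 < p11)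
    (hp : 0 < p11 * p22 - p12 ^ 2) (hq11 : 0 < q11) (hq : 0 < q11 * q22 - q12 ^ 2)
    (hdet : p11 * p22 - p12 ^ 2 = q11 * q22 - q12 ^ 2)
    (h0 : (p12 - q12) ^ 2 - (p11 - q11) * (p22 - q22) = 0) :
    p11 = q11 ∧ p12 = q12 ∧ p22 = q22 := by
  have hd0 : (p11 - q11) * (p22 - q22) - (p12 - q12) ^ 2 = 0 := by linarith
  have e1 : p11 * ((p11 - q11) * (p22 - q22) - (p12 - q12) ^ 2) * (p11 - q11)
      = p11 ^ 2 * ((p11 - q11) * (p22 - q22) - (p12 - q12) ^ 2)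
      + (p11 * (p12 - q12) - p12 * (p11 - q11)) ^ 2
      + (p11 * p22 - p12 ^ 2) * (p11 - q11) ^ 2 := by
    linear_combination (-(p11 * (p11 - q11))) * hdet
  rw [hd0] at e1
  simp only [mul_zero, zero_mul, zero_add] at e1
  have hD11sq : (p11 - q11) ^ 2 ≤ 0 := by
    nlinarith [sq_nonneg (p11 * (p12 - q12) - p12 * (p11 - q11))]
  have hD11 : p11 - q11 = 0 := by
    have h5 := le_antisymm hD11sq (sq_nonneg _)
    exact (pow_eq_zero_iff two_ne_zero).mp h5
  have hD12 : p12 - q12 = 0 := by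
    have hS : (p11 * (p12 - q12)) ^ 2 = 0 := by linear_combination -e1
      + (2 * p12 * (p11 * (p12 - q12)) - p12 ^ 2 * (p11 - q11)
        - (p11 * p22 - p12 ^ 2) * (p11 - q11)) * hD11
    have h1 : p11 * (p12 - q12) = 0 := (pow_eq_zero_iff two_ne_zero).mp hS
    rcases mul_eq_zero.1 h1 with h | h
    · linarith
    · exact h
  have hcp : p11 * (p22 - q22) + p22 * (p11 - q11) - 2 * p12 * (p12 - q12) = 0 := by
    linear_combination hdet + hd0
  have hD22 : p22 - q22 = 0 := by
    have h1 : p11 * (p22 - q22) = 0 := by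
      linear_combination hcp - p22 * hD11 + 2 * p12 * hD12
    rcases mul_eq_zero.1 h1 with h | h
    · linarith
    · exact h
  exact ⟨by linarith, by linarith, by linarith⟩

lemma exists_max {f : ℝ × ℝ → ℝ} (hf : Continuous f) (hper : Biperiodic f) :
    ∃ z0 : ℝ × ℝ, ∀ z, f z ≤ f z0 := by
  obtain ⟨z0, hz0mem, hz0⟩ := (isCompact_Icc.prod isCompact_Icc).exists_isMaxOn
    ((Set.nonempty_Icc.2 zero_le_one).prod (Set.nonempty_Icc.2 zero_le_one))
    hf.continuousOn
  refine ⟨z0, fun z => ?_⟩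
  obtain ⟨x, y⟩ := z
  rw [bp_eq_fract hper x y]
  exact hz0 ⟨⟨Int.fract_nonneg x, (Int.fract_lt_one x).le⟩,
    ⟨Int.fract_nonneg y, (Int.fract_lt_one y).le⟩⟩

lemma ode_zero_fwd (L : (ℝ × ℝ) →L[ℝ] (ℝ × ℝ)) (w : ℝ → ℝ × ℝ)
    (hw : ∀ t, HasDerivAt w (L (w t)) t) {t0 t1 : ℝ} (h01 : t0 ≤ t1) (h0 : w t0 = 0) :
    w t1 = 0 := by
  have hcont : Continuous w := continuous_iff_continuousAt.2 fun s => (hw s).continuousAt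
  have key := ODE_solution_unique (v := fun _ z => L z) (K := ‖L‖₊) (f := w)
    (g := fun _ => (0 : ℝ × ℝ)) (a := t0) (b := t1)
    (fun _ => L.lipschitz) hcont.continuousOn
    (fun s _ => (hw s).hasDerivWithinAt)
    continuous_const.continuousOn
    (fun s _ => by simpa [L.map_zero] using (hasDerivWithinAt_const s (Set.Ici s) (0 : ℝ × ℝ)))
    h0
  exact key ⟨h01, le_rfl⟩

lemma ode_zero (L : (ℝ × ℝ) →L[ℝ] (ℝ × ℝ)) (w : ℝ → ℝ × ℝ)
    (hw : ∀ t, HasDerivAt w (L (w t)) t) (t0 : ℝ) (h0 : w t0 = 0) : ∀ t, w t = 0 := by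
  intro t
  rcases le_total t0 t with h | h
  · exact ode_zero_fwd L w hw h h0
  · have hw2 : ∀ s, HasDerivAt (fun s => w (2 * t0 - s)) ((-L) (w (2 * t0 - s))) s := by
      intro s
      have h1 : HasDerivAt (fun s : ℝ => 2 * t0 - s) (-1) s := by
        simpa [Pi.sub_def] using ((hasDerivAt_const s (2 * t0)).sub (hasDerivAt_id s))
      have h2 := (hw (2 * t0 - s)).scomp s h1
      simpa [neg_smul, one_smul, Function.comp_def] using h2
    have h0' : (fun s => w (2 * t0 - s)) t0 = 0 := by
      have : 2 * t0 - t0 = t0 := by ring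
      simp only [this]
      exact h0
    have := ode_zero_fwd (-L) (fun s => w (2 * t0 - s)) hw2 (t0 := t0) (t1 := 2 * t0 - t)
      (by linarith) h0'
    have he : 2 * t0 - (2 * t0 - t) = t := by ring
    rwa [he] at this

lemma pdy_sub {f g : ℝ × ℝ → ℝ} {z : ℝ × ℝ} (hf : DifferentiableAt ℝ f z)
    (hg : DifferentiableAt ℝ g z) :
    pdy (fun z => f z - g z) z = pdy f z - pdy g z := by
  show fderiv ℝ (fun z => f z - g z) z (0, 1) = _
  rw [fderiv_fun_sub hf hg]
  rfl

lemma grad_zero_everywhere {u : ℝ × ℝ → ℝ} (hu : ContDiff ℝ 2 u)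
    {l11 l12 l22 m11 m12 m22 : ℝ}
    (hA : ∀ z, pdx (pdx u) z = l11 * pdx u z + m11 * pdy u z)
    (hCy : ∀ z, pdy (pdx u) z = l12 * pdx u z + m12 * pdy u z)
    (hB : ∀ z, pdy (pdy u) z = l22 * pdx u z + m22 * pdy u z)
    {z0 : ℝ × ℝ} (h0x : pdx u z0 = 0) (h0y : pdy u z0 = 0) (z : ℝ × ℝ) :
    pdx u z = 0 ∧ pdy u z = 0 := by
  obtain ⟨x0, y0⟩ := z0
  obtain ⟨x, y⟩ := z
  have huxd : Differentiable ℝ (pdx u) := (contDiff_one_pdx hu).differentiable (by norm_num)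
  have huyd : Differentiable ℝ (pdy u) := (contDiff_one_pdy hu).differentiable (by norm_num)
  have hCx : ∀ z, pdx (pdy u) z = l12 * pdx u z + m12 * pdy u z := fun z => by
    rw [pdx_pdy_comm hu z]; exact hCy z
  set fstm := ContinuousLinearMap.fst ℝ ℝ ℝ with hfstm
  set sndm := ContinuousLinearMap.snd ℝ ℝ ℝ with hsndm
  set Lx : (ℝ × ℝ) →L[ℝ] (ℝ × ℝ) :=
    (l11 • fstm + m11 • sndm).prod (l12 • fstm + m12 • sndm) with hLx
  set Ly : (ℝ × ℝ) →L[ℝ] (ℝ × ℝ) :=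
    (l12 • fstm + m12 • sndm).prod (l22 • fstm + m22 • sndm) with hLy
  have hhor : ∀ t : ℝ, pdx u (t, y0) = 0 ∧ pdy u (t, y0) = 0 := by
    have hw : ∀ t, HasDerivAt (fun t => ((pdx u (t, y0), pdy u (t, y0)) : ℝ × ℝ))
        (Lx ((pdx u (t, y0), pdy u (t, y0)))) t := by
      intro t
      have d1 : HasDerivAt (fun t => pdx u (t, y0)) (pdx (pdx u) (t, y0)) t :=
        hasDerivAt_slice_x (huxd _)
      have d2 : HasDerivAt (fun t => pdy u (t, y0)) (pdx (pdy u) (t, y0)) t :=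
        hasDerivAt_slice_x (huyd _)
      have h4 : Lx ((pdx u (t, y0), pdy u (t, y0)))
          = (pdx (pdx u) (t, y0), pdx (pdy u) (t, y0)) := by
        rw [hA (t, y0), hCx (t, y0)]
        simp [hLx, hfstm, hsndm]
      rw [h4]
      exact d1.prodMk d2
    have h00 : (fun t => ((pdx u (t, y0), pdy u (t, y0)) : ℝ × ℝ)) x0 = 0 := by
      show ((pdx u (x0, y0), pdy u (x0, y0)) : ℝ × ℝ) = 0
      rw [h0x, h0y]
      rfl
    intro t
    have := ode_zero Lx _ hw x0 h00 t
    exact Prod.mk_eq_zero.mp this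
  have hvert : ∀ t : ℝ, pdx u (x, t) = 0 ∧ pdy u (x, t) = 0 := by
    have hw : ∀ t, HasDerivAt (fun t => ((pdx u (x, t), pdy u (x, t)) : ℝ × ℝ))
        (Ly ((pdx u (x, t), pdy u (x, t)))) t := by
      intro t
      have d1 : HasDerivAt (fun t => pdx u (x, t)) (pdy (pdx u) (x, t)) t :=
        hasDerivAt_slice_y (huxd _)
      have d2 : HasDerivAt (fun t => pdy u (x, t)) (pdy (pdy u) (x, t)) t :=
        hasDerivAt_slice_y (huyd _)
      have h4 : Ly ((pdx u (x, t), pdy u (x, t)))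
          = (pdy (pdx u) (x, t), pdy (pdy u) (x, t)) := by
        rw [hCy (x, t), hB (x, t)]
        simp [hLy, hfstm, hsndm]
      rw [h4]
      exact d1.prodMk d2
    have h00 : (fun t => ((pdx u (x, t), pdy u (x, t)) : ℝ × ℝ)) y0 = 0 := by
      show ((pdx u (x, y0), pdy u (x, y0)) : ℝ × ℝ) = 0
      rw [(hhor x).1, (hhor x).2]
      rfl
    intro t
    have := ode_zero Ly _ hw y0 h00 t
    exact Prod.mk_eq_zero.mp this
  exact hvert y

lemma fderiv_zero_of_partials {u : ℝ × ℝ → ℝ} (hd : Differentiable ℝ u) {z : ℝ × ℝ}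
    (hx : pdx u z = 0) (hy : pdy u z = 0) : fderiv ℝ u z = 0 := by
  apply ContinuousLinearMap.ext
  intro w
  have hw : w = w.1 • ((1:ℝ), (0:ℝ)) + w.2 • ((0:ℝ), (1:ℝ)) := by
    obtain ⟨a, b⟩ := w
    simp [Prod.ext_iff]
  rw [ContinuousLinearMap.zero_apply, hw, map_add, _root_.map_smul, _root_.map_smul]
  have h1 : fderiv ℝ u z (1, 0) = 0 := hx
  have h2 : fderiv ℝ u z (0, 1) = 0 := hy
  rw [h1, h2]
  simp

end GMAaux


/-- Uniqueness, modulo additive constants, of solutions of the generalized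
Monge–Ampère equation on the 2-torus. -/
theorem gma_uniqueness (a b c l11 l12 l22 m11 m12 m22 : ℝ)
    (hpd : (!![a, c; c, b]).PosDef)
    (h1 : m11 * l22 = 0)
    (h2 : l11 * l22 - l12 ^ 2 = 0)
    (h3 : m11 * m22 - m12 ^ 2 = 0)
    (h4 : l11 * m22 + l22 * m11 - 2 * l12 * m12 = 0)
    (F : ℝ × ℝ → ℝ) (hF : ContDiff ℝ (⊤ : ℕ∞) F) (hFper : Biperiodic F)
    (p q : ℝ × ℝ → ℝ)
    (hp : ContDiff ℝ 2 p) (hpper : Biperiodic p)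
    (hq : ContDiff ℝ 2 q) (hqper : Biperiodic q)
    (heqp : ∀ z : ℝ × ℝ,
      (a + pdx (pdx p) z - l11 * pdx p z - m11 * pdy p z) *
          (b + pdy (pdy p) z - l22 * pdx p z - m22 * pdy p z) -
        (c + pdy (pdx p) z - l12 * pdx p z - m12 * pdy p z) ^ 2 = Real.exp (F z))
    (hposp : ∀ z : ℝ × ℝ,
      (!![a + pdx (pdx p) z - l11 * pdx p z - m11 * pdy p z,
          c + pdy (pdx p) z - l12 * pdx p z - m12 * pdy p z;
          c + pdy (pdx p) z - l12 * pdx p z - m12 * pdy p z,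
          b + pdy (pdy p) z - l22 * pdx p z - m22 * pdy p z]).PosDef)
    (heqq : ∀ z : ℝ × ℝ,
      (a + pdx (pdx q) z - l11 * pdx q z - m11 * pdy q z) *
          (b + pdy (pdy q) z - l22 * pdx q z - m22 * pdy q z) -
        (c + pdy (pdx q) z - l12 * pdx q z - m12 * pdy q z) ^ 2 = Real.exp (F z))
    (hposq : ∀ z : ℝ × ℝ,
      (!![a + pdx (pdx q) z - l11 * pdx q z - m11 * pdy q z,
          c + pdy (pdx q) z - l12 * pdx q z - m12 * pdy q z;
          c + pdy (pdx q) z - l12 * pdx q z - m12 * pdy q z,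
          b + pdy (pdy q) z - l22 * pdx q z - m22 * pdy q z]).PosDef) :
    ∃ k : ℝ, ∀ z : ℝ × ℝ, p z - q z = k := by
  classical
  open GMAaux in
  set u : ℝ × ℝ → ℝ := fun z => p z - q z with hudef
  have hu2 : ContDiff ℝ 2 u := hp.sub hq
  have huper : Biperiodic u := GMAaux.bp_sub hpper hqper
  have hpd : Differentiable ℝ p := hp.differentiable (by norm_num)
  have hqd : Differentiable ℝ q := hq.differentiable (by norm_num)
  have hpxd : Differentiable ℝ (pdx p) := (GMAaux.contDiff_one_pdx hp).differentiable (by norm_num)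
  have hqxd : Differentiable ℝ (pdx q) := (GMAaux.contDiff_one_pdx hq).differentiable (by norm_num)
  have hpyd : Differentiable ℝ (pdy p) := (GMAaux.contDiff_one_pdy hp).differentiable (by norm_num)
  have hqyd : Differentiable ℝ (pdy q) := (GMAaux.contDiff_one_pdy hq).differentiable (by norm_num)
  have hux : ∀ z, pdx u z = pdx p z - pdx q z := fun z => GMAaux.pdx_sub (hpd z) (hqd z)
  have huy : ∀ z, pdy u z = pdy p z - pdy q z := fun z => GMAaux.pdy_sub (hpd z) (hqd z)
  have huxfun : pdx u = fun z => pdx p z - pdx q z := funext hux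
  have huyfun : pdy u = fun z => pdy p z - pdy q z := funext huy
  have hAu : ∀ z, pdx (pdx u) z = pdx (pdx p) z - pdx (pdx q) z := fun z => by
    rw [huxfun]; exact GMAaux.pdx_sub (hpxd z) (hqxd z)
  have hCu : ∀ z, pdy (pdx u) z = pdy (pdx p) z - pdy (pdx q) z := fun z => by
    rw [huxfun]; exact GMAaux.pdy_sub (hpxd z) (hqxd z)
  have hBu : ∀ z, pdy (pdy u) z = pdy (pdy p) z - pdy (pdy q) z := fun z => by
    rw [huyfun]; exact GMAaux.pdy_sub (hpyd z) (hqyd z)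
  set G : ℝ × ℝ → ℝ := fun z => (pdy (pdx u) z - l12 * pdx u z - m12 * pdy u z) ^ 2
      - (pdx (pdx u) z - l11 * pdx u z - m11 * pdy u z)
        * (pdy (pdy u) z - l22 * pdx u z - m22 * pdy u z) with hGdef
  have hGdiff : ∀ z, G z =
      ((c + pdy (pdx p) z - l12 * pdx p z - m12 * pdy p z)
        - (c + pdy (pdx q) z - l12 * pdx q z - m12 * pdy q z)) ^ 2
      - ((a + pdx (pdx p) z - l11 * pdx p z - m11 * pdy p z)
        - (a + pdx (pdx q) z - l11 * pdx q z - m11 * pdy q z))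
      * ((b + pdy (pdy p) z - l22 * pdx p z - m22 * pdy p z)
        - (b + pdy (pdy q) z - l22 * pdx q z - m22 * pdy q z)) := by
    intro z
    rw [hGdef]
    simp only []
    rw [hAu z, hCu z, hBu z, hux z, huy z]
    ring
  have hcux : Continuous (pdx u) := (GMAaux.contDiff_one_pdx hu2).continuous
  have hcuy : Continuous (pdy u) := (GMAaux.contDiff_one_pdy hu2).continuous
  have hcA : Continuous (pdx (pdx u)) := GMAaux.c1_cont_pdx (GMAaux.contDiff_one_pdx hu2)
  have hcC : Continuous (pdy (pdx u)) := GMAaux.c1_cont_pdy (GMAaux.contDiff_one_pdx hu2)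
  have hcB : Continuous (pdy (pdy u)) := GMAaux.c1_cont_pdy (GMAaux.contDiff_one_pdy hu2)
  have hGcont : Continuous G := by
    rw [hGdef]
    apply Continuous.sub
    · exact ((hcC.sub (continuous_const.mul hcux)).sub (continuous_const.mul hcuy)).pow 2
    · exact ((hcA.sub (continuous_const.mul hcux)).sub (continuous_const.mul hcuy)).mul
        ((hcB.sub (continuous_const.mul hcux)).sub (continuous_const.mul hcuy))
  have pux : Biperiodic (pdx u) := GMAaux.uxper hu2 huper
  have puy : Biperiodic (pdy u) := GMAaux.uyper hu2 huper
  have pA : Biperiodic (pdx (pdx u)) :=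
    GMAaux.bp_pdx pux ((GMAaux.contDiff_one_pdx hu2).differentiable (by norm_num))
  have pC : Biperiodic (pdy (pdx u)) :=
    GMAaux.bp_pdy pux ((GMAaux.contDiff_one_pdx hu2).differentiable (by norm_num))
  have pB : Biperiodic (pdy (pdy u)) :=
    GMAaux.bp_pdy puy ((GMAaux.contDiff_one_pdy hu2).differentiable (by norm_num))
  have hGper : Biperiodic G := by
    intro x y
    constructor
    · show (pdy (pdx u) (x+1, y) - l12 * pdx u (x+1, y) - m12 * pdy u (x+1, y)) ^ 2
        - (pdx (pdx u) (x+1, y) - l11 * pdx u (x+1, y) - m11 * pdy u (x+1, y))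
          * (pdy (pdy u) (x+1, y) - l22 * pdx u (x+1, y) - m22 * pdy u (x+1, y))
        = G (x, y)
      rw [(pC x y).1, (pux x y).1, (puy x y).1, (pA x y).1, (pB x y).1]
    · show (pdy (pdx u) (x, y+1) - l12 * pdx u (x, y+1) - m12 * pdy u (x, y+1)) ^ 2
        - (pdx (pdx u) (x, y+1) - l11 * pdx u (x, y+1) - m11 * pdy u (x, y+1))
          * (pdy (pdy u) (x, y+1) - l22 * pdx u (x, y+1) - m22 * pdy u (x, y+1))
        = G (x, y)
      rw [(pC x y).2, (pux x y).2, (puy x y).2, (pA x y).2, (pB x y).2]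
  have hGnn : ∀ z, 0 ≤ G z := by
    intro z
    have hpos1 := GMAaux.posdef_fin_two (hposp z)
    have hpos2 := GMAaux.posdef_fin_two (hposq z)
    have hdp : 0 < (a + pdx (pdx p) z - l11 * pdx p z - m11 * pdy p z)
        * (b + pdy (pdy p) z - l22 * pdx p z - m22 * pdy p z)
        - (c + pdy (pdx p) z - l12 * pdx p z - m12 * pdy p z) ^ 2 := by
      rw [heqp z]; exact Real.exp_pos _
    have hdq : 0 < (a + pdx (pdx q) z - l11 * pdx q z - m11 * pdy q z)
        * (b + pdy (pdy q) z - l22 * pdx q z - m22 * pdy q z)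
        - (c + pdy (pdx q) z - l12 * pdx q z - m12 * pdy q z) ^ 2 := by
      rw [heqq z]; exact Real.exp_pos _
    rw [hGdiff z]
    exact GMAaux.det_diff_nonneg hpos1.1 hdp hpos2.1 hdq (by rw [heqp z, heqq z])
  have hGint : iint G = 0 := by
    rw [hGdef]
    exact GMAaux.iint_G_zero hu2 huper l11 l12 l22 m11 m12 m22 h2 h3 h4
  have hG0 : ∀ z, G z = 0 := GMAaux.nonneg_iint_zero hGcont hGnn hGper hGint
  have hMeq : ∀ z,
      (a + pdx (pdx p) z - l11 * pdx p z - m11 * pdy p z)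
        = (a + pdx (pdx q) z - l11 * pdx q z - m11 * pdy q z)
      ∧ (c + pdy (pdx p) z - l12 * pdx p z - m12 * pdy p z)
        = (c + pdy (pdx q) z - l12 * pdx q z - m12 * pdy q z)
      ∧ (b + pdy (pdy p) z - l22 * pdx p z - m22 * pdy p z)
        = (b + pdy (pdy q) z - l22 * pdx q z - m22 * pdy q z) := by
    intro z
    have hpos1 := GMAaux.posdef_fin_two (hposp z)
    have hpos2 := GMAaux.posdef_fin_two (hposq z)
    have hdp : 0 < (a + pdx (pdx p) z - l11 * pdx p z - m11 * pdy p z)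
        * (b + pdy (pdy p) z - l22 * pdx p z - m22 * pdy p z)
        - (c + pdy (pdx p) z - l12 * pdx p z - m12 * pdy p z) ^ 2 := by
      rw [heqp z]; exact Real.exp_pos _
    have hdq : 0 < (a + pdx (pdx q) z - l11 * pdx q z - m11 * pdy q z)
        * (b + pdy (pdy q) z - l22 * pdx q z - m22 * pdy q z)
        - (c + pdy (pdx q) z - l12 * pdx q z - m12 * pdy q z) ^ 2 := by
      rw [heqq z]; exact Real.exp_pos _
    have h0 := hG0 z
    rw [hGdiff z] at h0
    exact GMAaux.det_diff_eq_zero hpos1.1 hdp hpos2.1 hdq (by rw [heqp z, heqq z]) h0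
  have hAeq : ∀ z, pdx (pdx u) z = l11 * pdx u z + m11 * pdy u z := by
    intro z
    rw [hAu z, hux z, huy z]
    linear_combination (hMeq z).1
  have hCeq : ∀ z, pdy (pdx u) z = l12 * pdx u z + m12 * pdy u z := by
    intro z
    rw [hCu z, hux z, huy z]
    linear_combination (hMeq z).2.1
  have hBeq : ∀ z, pdy (pdy u) z = l22 * pdx u z + m22 * pdy u z := by
    intro z
    rw [hBu z, hux z, huy z]
    linear_combination (hMeq z).2.2
  obtain ⟨z0, hz0⟩ := GMAaux.exists_max hu2.continuous huper
  have hloc : IsLocalMax u z0 := Filter.Eventually.of_forall hz0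
  have hf0 : fderiv ℝ u z0 = 0 := hloc.fderiv_eq_zero
  have h0x : pdx u z0 = 0 := by
    show fderiv ℝ u z0 (1, 0) = 0
    rw [hf0]; rfl
  have h0y : pdy u z0 = 0 := by
    show fderiv ℝ u z0 (0, 1) = 0
    rw [hf0]; rfl
  have hgrad := GMAaux.grad_zero_everywhere hu2 hAeq hCeq hBeq h0x h0y
  have hfall : ∀ z, fderiv ℝ u z = 0 := fun z =>
    GMAaux.fderiv_zero_of_partials (hu2.differentiable (by norm_num)) (hgrad z).1 (hgrad z).2
  refine ⟨p (0, 0) - q (0, 0), fun z => ?_⟩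
  exact is_const_of_fderiv_eq_zero (hu2.differentiable (by norm_num)) hfall z (0, 0)
end

section
/- Let f : ℝ → ℝ be a twice continuously differentiable 1-periodic function, and let α, β ∈ ℝ satisfy f''(s) + α f'(s) ≥ β for all s ∈ ℝ. Then |f'(s)| ≤ 2|β| e^{2|α|} for all s ∈ ℝ. -/
open intervalIntegral

/-- Key FTC estimate: if `g' + α g ≥ β` then `e^{αu} g u` grows at least like
`β ∫ e^{αu}`. -/
lemma periodic_gradient_estimate_aux (g : ℝ → ℝ) (hg : ContDiff ℝ 1 g) (α β : ℝ)
    (h : ∀ s : ℝ, deriv g s + α * g s ≥ β) {a b : ℝ} (hab : a ≤ b) :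
    Real.exp (α * b) * g b - Real.exp (α * a) * g a ≥
      β * ∫ u in a..b, Real.exp (α * u) := by
  have hgd : Differentiable ℝ g := hg.differentiable one_ne_zero
  have hgd' : Continuous (deriv g) := (contDiff_one_iff_deriv.mp hg).2
  set φ : ℝ → ℝ := fun u => Real.exp (α * u) * α * g u + Real.exp (α * u) * deriv g u with hφ
  have hder : ∀ u : ℝ, HasDerivAt (fun u => Real.exp (α * u) * g u) (φ u) u := by
    intro u
    have hl : HasDerivAt (fun u : ℝ => α * u) α u := by
      simpa using (hasDerivAt_id u).const_mul α
    have h1 : HasDerivAt (fun u : ℝ => Real.exp (α * u)) (Real.exp (α * u) * α) u := hl.exp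
    have h2 : HasDerivAt g (deriv g u) u := (hgd u).hasDerivAt
    exact h1.mul h2
  have hφc : Continuous φ := by
    apply Continuous.add
    · exact (((Real.continuous_exp.comp (continuous_const.mul continuous_id)).mul
        continuous_const).mul hgd.continuous)
    · exact (Real.continuous_exp.comp (continuous_const.mul continuous_id)).mul hgd'
  have hFTC : ∫ u in a..b, φ u =
      Real.exp (α * b) * g b - Real.exp (α * a) * g a :=
    intervalIntegral.integral_eq_sub_of_hasDerivAt (fun u _ => hder u)
      (hφc.intervalIntegrable a b)
  have hmono : (∫ u in a..b, β * Real.exp (α * u)) ≤ ∫ u in a..b, φ u := by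
    apply intervalIntegral.integral_mono_on hab
    · exact ((continuous_const.mul
        (Real.continuous_exp.comp (continuous_const.mul continuous_id))).intervalIntegrable a b)
    · exact hφc.intervalIntegrable a b
    · intro u _
      have := h u
      have hpos : (0:ℝ) < Real.exp (α * u) := Real.exp_pos _
      have : Real.exp (α * u) * β ≤ Real.exp (α * u) * (deriv g u + α * g u) := by
        exact mul_le_mul_of_nonneg_left this hpos.le
      simp only [hφ]; nlinarith
  rw [intervalIntegral.integral_const_mul] at hmono
  linarith [hFTC ▸ hmono]

/-- Bound on `∫_a^b e^{αu}` by its value near a point `c` with `a ≤ c ≤ b`... we use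
endpoints. -/
lemma periodic_gradient_estimate_int_bound (α : ℝ) {a b c : ℝ} (hab : a ≤ b)
    (hba : b - a ≤ 1) (hc : |c - a| ≤ 1 ∧ |c - b| ≤ 1) :
    (0 ≤ ∫ u in a..b, Real.exp (α * u)) ∧
      (∫ u in a..b, Real.exp (α * u)) ≤ Real.exp |α| * Real.exp (α * c) := by
  constructor
  · apply intervalIntegral.integral_nonneg hab
    intro u _; positivity
  · have hbd : ∀ u ∈ Set.Icc a b, Real.exp (α * u) ≤ Real.exp |α| * Real.exp (α * c) := by
      intro u hu
      rw [← Real.exp_add]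
      apply Real.exp_le_exp.mpr
      have h1 : |u - c| ≤ 1 := by
        rcases abs_le.mp hc.1 with ⟨l1, r1⟩
        rcases abs_le.mp hc.2 with ⟨l2, r2⟩
        rw [abs_le]; constructor <;> nlinarith [hu.1, hu.2]
      have : α * u - α * c = α * (u - c) := by ring
      nlinarith [abs_mul α (u - c), le_abs_self (α * (u - c)), abs_nonneg α,
        mul_le_mul_of_nonneg_left h1 (abs_nonneg α)]
    calc (∫ u in a..b, Real.exp (α * u)) ≤
        ∫ _ in a..b, Real.exp |α| * Real.exp (α * c) := by
          apply intervalIntegral.integral_mono_on hab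
          · exact ((Real.continuous_exp.comp
              (continuous_const.mul continuous_id)).intervalIntegrable a b)
          · exact intervalIntegrable_const
          · exact hbd
      _ = (b - a) * (Real.exp |α| * Real.exp (α * c)) := by
          rw [intervalIntegral.integral_const]; simp [smul_eq_mul]
      _ ≤ 1 * (Real.exp |α| * Real.exp (α * c)) := by
          apply mul_le_mul_of_nonneg_right hba; positivity
      _ = Real.exp |α| * Real.exp (α * c) := one_mul _

/-- A periodic function whose derivative satisfies a linear differential inequality
`f'' + α f' ≥ β` has its derivative bounded by `2|β| e^{2|α|}`. -/
theorem periodic_gradient_estimate (f : ℝ → ℝ) (hf : ContDiff ℝ 2 f)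
    (hper : ∀ s : ℝ, f (s + 1) = f s) (α β : ℝ)
    (h : ∀ s : ℝ, deriv (deriv f) s + α * deriv f s ≥ β) :
    ∀ s : ℝ, |deriv f s| ≤ 2 * |β| * Real.exp (2 * |α|) := by
  set g := deriv f with hgdef
  have hg : ContDiff ℝ 1 g := by
    rw [show (2 : WithTop ℕ∞) = 1 + 1 from rfl, contDiff_succ_iff_deriv] at hf
    exact hf.2.2
  have hperg : Function.Periodic g 1 := by
    intro x
    have h1 : deriv (fun y => f (y + 1)) x = deriv f (x + 1) := deriv_comp_add_const f 1 x
    have h2 : (fun y => f (y + 1)) = f := funext hper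
    simp only [hgdef]
    rw [← h1, h2]
  -- Rolle: a zero of g in (0,1)
  obtain ⟨c, hc01, hc⟩ : ∃ c ∈ Set.Ioo (0:ℝ) 1, g c = 0 := by
    apply exists_deriv_eq_zero (by norm_num : (0:ℝ) < 1)
    · exact (hf.continuous).continuousOn
    · simpa using (hper 0).symm
  intro s
  -- integer translates of c are zeros of g
  have hzero : ∀ n : ℤ, g (c + n) = 0 := by
    intro n
    have := (hperg.int_mul n) c
    simpa using this.trans hc
  set z : ℝ := c + ⌊s - c⌋ with hz
  have hz1 : z ≤ s := by
    have := Int.floor_le (s - c); simp [hz]; linarith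
  have hz2 : s - z ≤ 1 := by
    have := Int.lt_floor_add_one (s - c); simp [hz]; linarith
  have hgz : g z = 0 := hzero _
  have hgz1 : g (z + 1) = 0 := by
    have := hperg z; rw [this]; exact hgz
  have hsz1 : s ≤ z + 1 := by linarith
  have hsz2 : z + 1 - s ≤ 1 := by linarith
  -- lower bound: use interval [z, s]
  have hlow : g s ≥ -(|β| * Real.exp |α|) := by
    have h1 := periodic_gradient_estimate_aux g hg α β h hz1
    obtain ⟨hI0, hIb⟩ := periodic_gradient_estimate_int_bound α hz1 (by linarith)
      (c := s) ⟨by rw [abs_of_nonneg (by linarith)]; linarith, by simp⟩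
    rw [hgz, mul_zero, sub_zero] at h1
    have h2 : β * (∫ u in z..s, Real.exp (α * u)) ≥
        -(|β| * (Real.exp |α| * Real.exp (α * s))) := by
      have := neg_abs_le β
      nlinarith [abs_nonneg β]
    have h3 : Real.exp (α * s) * g s ≥ -(|β| * (Real.exp |α| * Real.exp (α * s))) := by
      linarith
    have hpos : (0:ℝ) < Real.exp (α * s) := Real.exp_pos _
    nlinarith
  -- upper bound: use interval [s, z+1]
  have hhigh : g s ≤ |β| * Real.exp |α| := by
    have h1 := periodic_gradient_estimate_aux g hg α β h hsz1
    obtain ⟨hI0, hIb⟩ := periodic_gradient_estimate_int_bound α hsz1 (by linarith)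
      (c := s) ⟨by simp, by rw [abs_of_nonpos (by linarith)]; linarith⟩
    rw [hgz1, mul_zero, zero_sub] at h1
    have h2 : β * (∫ u in s..(z+1), Real.exp (α * u)) ≥
        -(|β| * (Real.exp |α| * Real.exp (α * s))) := by
      have := neg_abs_le β
      nlinarith [abs_nonneg β]
    have h3 : Real.exp (α * s) * g s ≤ |β| * (Real.exp |α| * Real.exp (α * s)) := by
      linarith
    have hpos : (0:ℝ) < Real.exp (α * s) := Real.exp_pos _
    nlinarith
  have habs : |g s| ≤ |β| * Real.exp |α| := abs_le.mpr ⟨by linarith, hhigh⟩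
  have hee : Real.exp |α| ≤ Real.exp (2 * |α|) :=
    Real.exp_le_exp.mpr (by nlinarith [abs_nonneg α])
  calc |g s| ≤ |β| * Real.exp |α| := habs
    _ ≤ |β| * Real.exp (2 * |α|) := mul_le_mul_of_nonneg_left hee (abs_nonneg β)
    _ ≤ 2 * |β| * Real.exp (2 * |α|) := by nlinarith [abs_nonneg β, Real.exp_pos (2*|α|)]
end

section
/- For every smooth biperiodic function p : ℝ² → ℝ, the Monge–Ampère integrand of p integrates to zero over the torus: ∫_{𝕋²}(p_xx p_yy − p_xy²) = 0. -/
open MeasureTheory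

/- ### Auxiliary lemmas -/

private lemma MA_cast1 : ((⊤:ℕ∞) : WithTop ℕ∞) + 1 ≤ ((⊤:ℕ∞) : WithTop ℕ∞) := by
  exact_mod_cast (le_top : (⊤:ℕ∞)+1 ≤ ⊤)

lemma MA_smooth_pd {p : ℝ × ℝ → ℝ} (hp : ContDiff ℝ (⊤ : ℕ∞) p) (v : ℝ × ℝ) :
    ContDiff ℝ (⊤ : ℕ∞) (fun z => fderiv ℝ p z v) :=
  (hp.fderiv_right (m := (⊤:ℕ∞)) MA_cast1).clm_apply contDiff_const

lemma MA_diff {p : ℝ × ℝ → ℝ} (hp : ContDiff ℝ (⊤ : ℕ∞) p) : Differentiable ℝ p :=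
  hp.differentiable (by simp)

lemma MA_fderiv_shift {p : ℝ × ℝ → ℝ} (hp : ContDiff ℝ (⊤ : ℕ∞) p) (c z : ℝ × ℝ)
    (h : ∀ w, p (w + c) = p w) : fderiv ℝ p (z + c) = fderiv ℝ p z := by
  have h1 : HasFDerivAt p (fderiv ℝ p (z + c)) (z + c) := (MA_diff hp (z + c)).hasFDerivAt
  have h2 : HasFDerivAt (fun w : ℝ × ℝ => w + c) (ContinuousLinearMap.id ℝ (ℝ × ℝ)) z :=
    (hasFDerivAt_id z).add_const c
  have h3 := h1.comp z h2
  simp only [Function.comp_def, h, ContinuousLinearMap.comp_id] at h3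
  exact (h3.fderiv).symm

lemma MA_clairaut {p : ℝ × ℝ → ℝ} (hp : ContDiff ℝ (⊤ : ℕ∞) p) (z : ℝ × ℝ) :
    pdx (pdy p) z = pdy (pdx p) z := by
  have hd : ∀ y, HasFDerivAt p (fderiv ℝ p y) y := fun y => (MA_diff hp y).hasFDerivAt
  have h2 : HasFDerivAt (fderiv ℝ p) (fderiv ℝ (fderiv ℝ p) z) z :=
    (MA_diff' z).hasFDerivAt
  have hsymm := second_derivative_symmetric hd h2 (1,0) (0,1)
  have key : ∀ v w : ℝ × ℝ, fderiv ℝ (fun y => fderiv ℝ p y v) z w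
      = fderiv ℝ (fderiv ℝ p) z w v := by
    intro v w
    rw [fderiv_clm_apply (MA_diff' z) (differentiableAt_const v)]
    simp
  have e1 : pdy p = fun y => fderiv ℝ p y (0,1) := rfl
  have e2 : pdx p = fun y => fderiv ℝ p y (1,0) := rfl
  simp only [pdx, pdy, e1, e2, key]
  exact hsymm
where
  MA_diff' := fun z => ((hp.fderiv_right (m := (⊤:ℕ∞)) MA_cast1).differentiable
    (by simp)) z

lemma MA_pd_mul {f g : ℝ × ℝ → ℝ} (hf : ContDiff ℝ (⊤ : ℕ∞) f) (hg : ContDiff ℝ (⊤ : ℕ∞) g)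
    (v z : ℝ × ℝ) :
    fderiv ℝ (fun w => f w * g w) z v = fderiv ℝ f z v * g z + f z * fderiv ℝ g z v := by
  rw [fderiv_fun_mul (MA_diff hf z) (MA_diff hg z)]
  simp only [ContinuousLinearMap.add_apply, ContinuousLinearMap.smul_apply, smul_eq_mul]
  ring

lemma MA_hasDerivAt_x {p : ℝ × ℝ → ℝ} (hp : ContDiff ℝ (⊤ : ℕ∞) p) (x y : ℝ) :
    HasDerivAt (fun t => p (t, y)) (pdx p (x, y)) x := by
  have h1 := (MA_diff hp (x, y)).hasFDerivAt
  have h2 : HasDerivAt (fun t : ℝ => (t, y)) ((1:ℝ), (0:ℝ)) x :=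
    (hasDerivAt_id x).prodMk (hasDerivAt_const x y)
  exact h1.comp_hasDerivAt x h2

lemma MA_hasDerivAt_y {p : ℝ × ℝ → ℝ} (hp : ContDiff ℝ (⊤ : ℕ∞) p) (x y : ℝ) :
    HasDerivAt (fun t => p (x, t)) (pdy p (x, y)) y := by
  have h1 := (MA_diff hp (x, y)).hasFDerivAt
  have h2 : HasDerivAt (fun t : ℝ => (x, t)) ((0:ℝ), (1:ℝ)) y :=
    (hasDerivAt_const y x).prodMk (hasDerivAt_id y)
  exact h1.comp_hasDerivAt y h2

lemma MA_cont_x {p : ℝ × ℝ → ℝ} (hp : ContDiff ℝ (⊤ : ℕ∞) p) (y : ℝ) :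
    Continuous (fun t : ℝ => pdx p (t, y)) :=
  (MA_smooth_pd hp (1,0)).continuous.comp (continuous_id.prodMk continuous_const)

lemma MA_cont_y {p : ℝ × ℝ → ℝ} (hp : ContDiff ℝ (⊤ : ℕ∞) p) (x : ℝ) :
    Continuous (fun t : ℝ => pdy p (x, t)) :=
  (MA_smooth_pd hp (0,1)).continuous.comp (continuous_const.prodMk continuous_id)

lemma MA_ftc_x {p : ℝ × ℝ → ℝ} (hp : ContDiff ℝ (⊤ : ℕ∞) p) (y : ℝ) :
    ∫ t in (0:ℝ)..1, pdx p (t, y) = p (1, y) - p (0, y) :=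
  intervalIntegral.integral_eq_sub_of_hasDerivAt
    (fun t _ => MA_hasDerivAt_x hp t y) ((MA_cont_x hp y).intervalIntegrable 0 1)

lemma MA_ftc_y {p : ℝ × ℝ → ℝ} (hp : ContDiff ℝ (⊤ : ℕ∞) p) (x : ℝ) :
    ∫ t in (0:ℝ)..1, pdy p (x, t) = p (x, 1) - p (x, 0) :=
  intervalIntegral.integral_eq_sub_of_hasDerivAt
    (fun t _ => MA_hasDerivAt_y hp x t) ((MA_cont_y hp x).intervalIntegrable 0 1)

lemma MA_per_vec1 {p : ℝ × ℝ → ℝ} (h : Biperiodic p) (w : ℝ × ℝ) :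
    p (w + ((1:ℝ), (0:ℝ))) = p w := by
  have : w + ((1:ℝ), (0:ℝ)) = (w.1 + 1, w.2) := by
    ext <;> simp
  rw [this]
  have := (h w.1 w.2).1
  simpa using this

lemma MA_per_vec2 {p : ℝ × ℝ → ℝ} (h : Biperiodic p) (w : ℝ × ℝ) :
    p (w + ((0:ℝ), (1:ℝ))) = p w := by
  have : w + ((0:ℝ), (1:ℝ)) = (w.1, w.2 + 1) := by
    ext <;> simp
  rw [this]
  have := (h w.1 w.2).2
  simpa using this

lemma MA_biper_pd {p : ℝ × ℝ → ℝ} (hp : ContDiff ℝ (⊤ : ℕ∞) p) (h : Biperiodic p) (v : ℝ × ℝ) :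
    Biperiodic (fun z => fderiv ℝ p z v) := by
  intro x y
  constructor
  · have h1 := MA_fderiv_shift hp ((1:ℝ),(0:ℝ)) (x, y) (MA_per_vec1 h)
    have e : ((x + 1, y) : ℝ × ℝ) = (x, y) + ((1:ℝ),(0:ℝ)) := by ext <;> simp
    show fderiv ℝ p (x + 1, y) v = fderiv ℝ p (x, y) v
    rw [e, h1]
  · have h1 := MA_fderiv_shift hp ((0:ℝ),(1:ℝ)) (x, y) (MA_per_vec2 h)
    have e : ((x, y + 1) : ℝ × ℝ) = (x, y) + ((0:ℝ),(1:ℝ)) := by ext <;> simp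
    show fderiv ℝ p (x, y + 1) v = fderiv ℝ p (x, y) v
    rw [e, h1]

lemma MA_swap (f : ℝ × ℝ → ℝ) (hf : Continuous f) :
    ∫ x in (0:ℝ)..1, ∫ y in (0:ℝ)..1, f (x, y)
      = ∫ y in (0:ℝ)..1, ∫ x in (0:ℝ)..1, f (x, y) := by
  have h01 : (0:ℝ) ≤ 1 := zero_le_one
  simp only [intervalIntegral.integral_of_le h01]
  apply integral_integral_swap
  rw [Measure.prod_restrict]
  have hc : IsCompact ((Set.Icc (0:ℝ) 1) ×ˢ (Set.Icc (0:ℝ) 1)) :=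
    isCompact_Icc.prod isCompact_Icc
  have h2 : IntegrableOn (Function.uncurry fun x y => f (x, y))
      ((Set.Icc (0:ℝ) 1) ×ˢ (Set.Icc (0:ℝ) 1)) :=
    ((hf.comp (continuous_fst.prodMk continuous_snd)).continuousOn).integrableOn_compact hc
  exact h2.mono_set (Set.prod_mono Set.Ioc_subset_Icc_self Set.Ioc_subset_Icc_self)

noncomputable def MAA (p : ℝ × ℝ → ℝ) (z : ℝ × ℝ) : ℝ := pdy p z * pdx (pdx p) z
noncomputable def MAB (p : ℝ × ℝ → ℝ) (z : ℝ × ℝ) : ℝ := pdy p z * pdy (pdx p) z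

/-- The Monge–Ampère integrand of a smooth biperiodic function integrates to zero over
the 2-torus. -/
theorem monge_ampere_integrand_integrates_to_zero (p : ℝ × ℝ → ℝ)
    (hp : ContDiff ℝ (⊤ : ℕ∞) p) (hper : Biperiodic p) :
    torusInt (fun z => pdx (pdx p) z * pdy (pdy p) z - (pdy (pdx p) z) ^ 2) = 0 := by
  have hpx : ContDiff ℝ (⊤:ℕ∞) (pdx p) := MA_smooth_pd hp (1,0)
  have hpy : ContDiff ℝ (⊤:ℕ∞) (pdy p) := MA_smooth_pd hp (0,1)
  have hpxx : ContDiff ℝ (⊤:ℕ∞) (pdx (pdx p)) := MA_smooth_pd hpx (1,0)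
  have hpxy : ContDiff ℝ (⊤:ℕ∞) (pdy (pdx p)) := MA_smooth_pd hpx (0,1)
  have hpyy : ContDiff ℝ (⊤:ℕ∞) (pdy (pdy p)) := MA_smooth_pd hpy (0,1)
  have hAc : ContDiff ℝ (⊤:ℕ∞) (MAA p) := hpy.mul hpxx
  have hBc : ContDiff ℝ (⊤:ℕ∞) (MAB p) := hpy.mul hpxy
  -- pointwise identity : integrand = ∂y A − ∂x B
  have hpt : ∀ z, pdx (pdx p) z * pdy (pdy p) z - (pdy (pdx p) z) ^ 2
      = pdy (MAA p) z - pdx (MAB p) z := by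
    intro z
    have e1 : pdy (MAA p) z
        = pdy (pdy p) z * pdx (pdx p) z + pdy p z * pdy (pdx (pdx p)) z :=
      MA_pd_mul hpy hpxx (0,1) z
    have e2 : pdx (MAB p) z
        = pdx (pdy p) z * pdy (pdx p) z + pdy p z * pdx (pdy (pdx p)) z :=
      MA_pd_mul hpy hpxy (1,0) z
    rw [e1, e2, MA_clairaut hp z, MA_clairaut hpx z]
    ring
  have key : (fun z => pdx (pdx p) z * pdy (pdy p) z - (pdy (pdx p) z) ^ 2)
      = fun z => pdy (MAA p) z - pdx (MAB p) z := funext hpt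
  rw [key]
  -- periodicity of A and B
  have hpyper : Biperiodic (pdy p) := MA_biper_pd hp hper (0,1)
  have hpxper : Biperiodic (pdx p) := MA_biper_pd hp hper (1,0)
  have hpxxper : Biperiodic (pdx (pdx p)) := MA_biper_pd hpx hpxper (1,0)
  have hpxyper : Biperiodic (pdy (pdx p)) := MA_biper_pd hpx hpxper (0,1)
  have hAper : Biperiodic (MAA p) := by
    intro x y
    unfold MAA
    exact ⟨by rw [(hpyper x y).1, (hpxxper x y).1], by rw [(hpyper x y).2, (hpxxper x y).2]⟩
  have hBper : Biperiodic (MAB p) := by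
    intro x y
    unfold MAB
    exact ⟨by rw [(hpyper x y).1, (hpxyper x y).1], by rw [(hpyper x y).2, (hpxyper x y).2]⟩
  unfold torusInt
  -- inner integral of the ∂y A term vanishes
  have intB : ∀ x : ℝ, IntervalIntegrable (fun t : ℝ => pdx (MAB p) (x, t)) volume 0 1 := by
    intro x
    apply Continuous.intervalIntegrable
    exact (MA_smooth_pd hBc (1,0)).continuous.comp (continuous_const.prodMk continuous_id)
  have inner : ∀ x : ℝ,
      (∫ y in (0:ℝ)..1, (pdy (MAA p) (x, y) - pdx (MAB p) (x, y)))
      = - ∫ y in (0:ℝ)..1, pdx (MAB p) (x, y) := by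
    intro x
    rw [intervalIntegral.integral_sub ((MA_cont_y hAc x).intervalIntegrable 0 1) (intB x),
      MA_ftc_y hAc x]
    have h := (hAper x 0).2
    simp only [zero_add] at h
    rw [h]
    ring
  rw [intervalIntegral.integral_congr (fun x _ => inner x), intervalIntegral.integral_neg]
  -- swap order of integration for the ∂x B term
  rw [MA_swap (fun z => pdx (MAB p) z) (MA_smooth_pd hBc (1,0)).continuous]
  have inner2 : ∀ y : ℝ, (∫ x in (0:ℝ)..1, pdx (MAB p) (x, y)) = 0 := by
    intro y
    rw [MA_ftc_x hBc y]
    have h := (hBper 0 y).1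
    simp only [zero_add] at h
    rw [h]
    ring
  rw [intervalIntegral.integral_congr (fun y _ => inner2 y)]
  simp
end
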